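/- arXiv:1710.01105 — 5 statements merged into one kernel-verified Lean document; each statement's English description precedes it below -/
import Mathlib

section
/- Let X and Y be Borel-measurable random vectors in ℝ^m on a probability space such that X and Y are independent, Y is integrable, and the inner product ⟨X,Y⟩ is integrable. Suppose the law of Y is symmetric under negation, i.e., Y and −Y have the same distribution. Let μ > 0 and suppose the event A = {‖Y‖₂² ≥ μ} has positive probability. Then the conditional expectation of the correlation statistic given the detection event vanishes: E[⟨X,Y⟩ | A] = 0. (This is Theorem 1 of the paper: if the attacker's fake output y_k^v is independent of the watermark-driven virtual output y_k', the expected correlation detector statistic conditioned on the triggering event ‖y_k'‖₂² ≥ μ is zero.) -/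
open MeasureTheory ProbabilityTheory
open scoped RealInnerProductSpace

/-- Theorem 1 of the paper: if the fake output `X` is independent of the
watermark-driven virtual output `Y` (whose law is symmetric under negation),
then the expected correlation statistic, conditioned on the triggering event
`‖Y‖₂² ≥ μt`, is zero. Here `E[Z | A] = E[Z·1_A] / P(A)`. -/
theorem stmt_0 {Ω : Type*} [MeasurableSpace Ω] (μ : Measure Ω) [IsProbabilityMeasure μ]
    {m : ℕ} (X Y : Ω → EuclideanSpace ℝ (Fin m))
    (hX : Measurable X) (hY : Measurable Y)
    (hindep : IndepFun X Y μ)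
    (hYint : Integrable Y μ)
    (hZint : Integrable (fun ω => ⟪X ω, Y ω⟫) μ)
    (hsymm : Measure.map Y μ = Measure.map (fun ω => -(Y ω)) μ)
    (μt : ℝ) (hμt : 0 < μt)
    (A : Set Ω) (hA : A = {ω | μt ≤ ‖Y ω‖ ^ 2})
    (hApos : 0 < μ A) :
    (∫ ω in A, ⟪X ω, Y ω⟫ ∂μ) / (μ A).toReal = 0 := by
  suffices h : (∫ ω in A, ⟪X ω, Y ω⟫ ∂μ) = 0 by rw [h]; simp
  set F : EuclideanSpace ℝ (Fin m) × EuclideanSpace ℝ (Fin m) → ℝ :=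
    fun p => if μt ≤ ‖p.2‖ ^ 2 then ⟪p.1, p.2⟫ else 0 with hF
  have hFmeas : Measurable F := by
    apply Measurable.ite
    · exact measurableSet_le measurable_const
        ((measurable_snd.norm).pow measurable_const)
    · exact measurable_fst.inner measurable_snd
    · exact measurable_const
  have hAmeas : MeasurableSet A := by
    rw [hA]
    exact measurableSet_le measurable_const ((hY.norm).pow measurable_const)
  have hrw : (∫ ω in A, ⟪X ω, Y ω⟫ ∂μ) = ∫ ω, F (X ω, Y ω) ∂μ := by
    rw [← integral_indicator hAmeas]
    congr 1; ext ω
    simp [hF, Set.indicator, hA, Set.mem_setOf_eq]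
  have hindep2 : IndepFun X (fun ω => -(Y ω)) μ :=
    hindep.comp measurable_id measurable_neg
  have hmap1 := (indepFun_iff_map_prod_eq_prod_map_map hX.aemeasurable
    hY.aemeasurable).mp hindep
  have hmap2 := (indepFun_iff_map_prod_eq_prod_map_map hX.aemeasurable
    (by exact hY.neg : Measurable (fun ω => -(Y ω))).aemeasurable).mp hindep2
  have hmapeq : Measure.map (fun ω => (X ω, Y ω)) μ
      = Measure.map (fun ω => (X ω, -(Y ω))) μ := by
    rw [hmap1, hmap2, hsymm]
  have key : ∫ ω, F (X ω, Y ω) ∂μ = ∫ ω, F (X ω, -(Y ω)) ∂μ := by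
    rw [← integral_map (hX.prodMk hY).aemeasurable hFmeas.aestronglyMeasurable,
        ← integral_map (hX.prodMk (by exact hY.neg : Measurable (fun ω => -(Y ω)))).aemeasurable hFmeas.aestronglyMeasurable,
        hmapeq]
  have hneg : ∀ ω, F (X ω, -(Y ω)) = - F (X ω, Y ω) := by
    intro ω
    simp only [hF, norm_neg, inner_neg_right]
    split <;> simp
  have hzero : ∫ ω, F (X ω, Y ω) ∂μ = - ∫ ω, F (X ω, Y ω) ∂μ := by
    nth_rewrite 1 [key]
    simp_rw [hneg]
    exact integral_neg _
  rw [hrw]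
  linarith
end

section
/- Let A, F ∈ ℝ^{n×n}, let 0 < α ≤ 1 and 0 < β ≤ 1 with ᾱ = 1−α and β̄ = 1−β, and let ε > 0. Define the linear operator 𝓛₀ on pairs of n×n real matrices by 𝓛₀(X,Y) = ( A(ᾱX + αY)Aᵀ , F(βX + β̄Y)Fᵀ ). Define sequences of symmetric matrices by 𝒮₀ = ℛ₀ = εI and 𝒮_{k+1} = εI + ᾱAᵀ𝒮ₖA + αFᵀℛₖF, ℛ_{k+1} = εI + βAᵀ𝒮ₖA + β̄FᵀℛₖF. If there exist symmetric matrices S★ and R★ such that 𝒮ₖ ⪯ S★ and ℛₖ ⪯ R★ in the Loewner order for every k, then the operator 𝓛₀ is stable: for every pair (M,N) of n×n real matrices, 𝓛₀^k(M,N) → (0,0) as k → ∞. (This is the deterministic content of Lemma 1 of the paper, where the boundedness hypothesis encodes finiteness of the LQG cost under Markovian packet drops.) -/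
open Matrix Filter
open scoped Topology

set_option linter.unusedSectionVars false
set_option maxHeartbeats 1000000

namespace Stmt1Aux

variable {m : Type*} [Fintype m] [DecidableEq m]

lemma psd_quad {X : Matrix m m ℝ} (hX : X.PosSemidef) (x : m → ℝ) :
    0 ≤ x ⬝ᵥ (X *ᵥ x) := by simpa using hX.dotProduct_mulVec_nonneg x

lemma psd_smul {X : Matrix m m ℝ} (hX : X.PosSemidef) {c : ℝ} (hc : 0 ≤ c) :
    (c • X).PosSemidef := by
  refine .of_dotProduct_mulVec_nonneg ?_ ?_
  · unfold Matrix.IsHermitian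
    rw [conjTranspose_smul, hX.1.eq]
    simp
  · intro x
    have := hX.dotProduct_mulVec_nonneg x
    simp only [smul_mulVec, dotProduct_smul, smul_eq_mul]
    positivity

lemma psd_diag_nonneg {X : Matrix m m ℝ} (hX : X.PosSemidef) (i : m) :
    0 ≤ X i i := hX.diag_nonneg

lemma psd_trace_nonneg {X : Matrix m m ℝ} (hX : X.PosSemidef) : 0 ≤ X.trace :=
  Finset.sum_nonneg fun i _ => psd_diag_nonneg hX i

lemma psd_diag_le_trace {X : Matrix m m ℝ} (hX : X.PosSemidef) (i : m) :
    X i i ≤ X.trace :=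
  Finset.single_le_sum (fun j _ => psd_diag_nonneg hX j) (Finset.mem_univ i)

open scoped MatrixOrder in
lemma psd_exists {X : Matrix m m ℝ} (hX : X.PosSemidef) : ∃ B : Matrix m m ℝ, X = Bᴴ * B := by
  refine ⟨CFC.sqrt X, ?_⟩
  rw [(CFC.sqrt_nonneg X).posSemidef.isHermitian.eq, CFC.sqrt_mul_sqrt_self X hX.nonneg]

lemma trace_mul_nonneg {X D : Matrix m m ℝ} (hX : X.PosSemidef) (hD : D.PosSemidef) :
    0 ≤ (X * D).trace := by
  obtain ⟨B, rfl⟩ := psd_exists hX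
  have h1 : (Bᴴ * B * D).trace = (B * D * Bᴴ).trace := by
    rw [Matrix.trace_mul_cycle, Matrix.trace_mul_cycle]
  rw [h1]
  exact psd_trace_nonneg (hD.mul_mul_conjTranspose_same B)

lemma quad_le_trace {X : Matrix m m ℝ} (hX : X.PosSemidef) (x : m → ℝ) :
    x ⬝ᵥ (X *ᵥ x) ≤ X.trace * (x ⬝ᵥ x) := by
  obtain ⟨B, rfl⟩ := psd_exists hX
  have h1 : x ⬝ᵥ ((Bᴴ * B) *ᵥ x) = (B *ᵥ x) ⬝ᵥ (B *ᵥ x) := by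
    rw [← mulVec_mulVec, dotProduct_mulVec, conjTranspose_eq_transpose_of_trivial,
      vecMul_transpose]
  rw [h1]
  have h2 : ∀ i, (B *ᵥ x) i ^ 2 ≤ (∑ j, B i j ^ 2) * (x ⬝ᵥ x) := by
    intro i
    simpa [mulVec, dotProduct, pow_two] using
      Finset.sum_mul_sq_le_sq_mul_sq Finset.univ (fun j => B i j) x
  have h3 : (B *ᵥ x) ⬝ᵥ (B *ᵥ x) = ∑ i, (B *ᵥ x) i ^ 2 := by
    simp [dotProduct, pow_two]
  have h4 : (Bᴴ * B).trace = ∑ i, ∑ j, B j i ^ 2 := by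
    simp [Matrix.trace, Matrix.diag, Matrix.mul_apply, conjTranspose_apply, pow_two]
  rw [h3, h4, Finset.sum_comm, Finset.sum_mul]
  exact Finset.sum_le_sum fun i _ => by simpa using h2 i

lemma psd_trace_smul_one_sub {X : Matrix m m ℝ} (hX : X.PosSemidef) :
    (X.trace • (1 : Matrix m m ℝ) - X).PosSemidef := by
  refine .of_dotProduct_mulVec_nonneg ?_ ?_
  · unfold Matrix.IsHermitian
    rw [conjTranspose_sub, conjTranspose_smul, hX.1.eq]
    simp
  · intro x
    have := quad_le_trace hX x
    simp only [star_trivial, sub_mulVec, dotProduct_sub, smul_mulVec,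
      dotProduct_smul, smul_eq_mul, one_mulVec]
    linarith

lemma psd_sum {ι : Type*} (s : Finset ι) (f : ι → Matrix m m ℝ)
    (h : ∀ i ∈ s, (f i).PosSemidef) : (∑ i ∈ s, f i).PosSemidef := by
  classical
  induction s using Finset.induction_on with
  | empty => simpa using Matrix.PosSemidef.zero
  | insert _ _ hnot ih =>
    rw [Finset.sum_insert hnot]
    exact (h _ (Finset.mem_insert_self _ _)).add
      (ih fun i hi => h i (Finset.mem_insert_of_mem hi))

lemma two_cs {w1 w2 a b a' b' : ℝ} (hw1 : 0 ≤ w1) (hw2 : 0 ≤ w2)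
    (ha : 0 ≤ a) (hb : 0 ≤ b) (ha' : 0 ≤ a') (hb' : 0 ≤ b') :
    w1 * (Real.sqrt a * Real.sqrt a') + w2 * (Real.sqrt b * Real.sqrt b') ≤
      Real.sqrt (w1 * a + w2 * b) * Real.sqrt (w1 * a' + w2 * b') := by
  set s := Real.sqrt (w1 * a); set t := Real.sqrt (w1 * a')
  set u := Real.sqrt (w2 * b); set v := Real.sqrt (w2 * b')
  have hs : 0 ≤ s := Real.sqrt_nonneg _
  have ht : 0 ≤ t := Real.sqrt_nonneg _
  have hu : 0 ≤ u := Real.sqrt_nonneg _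
  have hv : 0 ≤ v := Real.sqrt_nonneg _
  have e1 : w1 * (Real.sqrt a * Real.sqrt a') = s * t := by
    rw [show w1 = Real.sqrt w1 * Real.sqrt w1 from (Real.mul_self_sqrt hw1).symm]
    simp only [s, t, Real.sqrt_mul hw1]
    ring
  have e2 : w2 * (Real.sqrt b * Real.sqrt b') = u * v := by
    rw [show w2 = Real.sqrt w2 * Real.sqrt w2 from (Real.mul_self_sqrt hw2).symm]
    simp only [u, v, Real.sqrt_mul hw2]
    ring
  have e3 : w1 * a = s * s := (Real.mul_self_sqrt (by positivity)).symm
  have e4 : w1 * a' = t * t := (Real.mul_self_sqrt (by positivity)).symm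
  have e5 : w2 * b = u * u := (Real.mul_self_sqrt (by positivity)).symm
  have e6 : w2 * b' = v * v := (Real.mul_self_sqrt (by positivity)).symm
  rw [e1, e2, e3, e4, e5, e6]
  have key : (s * t + u * v) ^ 2 ≤ (s * s + u * u) * (t * t + v * v) := by
    nlinarith [sq_nonneg (s * v - u * t)]
  calc s * t + u * v = Real.sqrt ((s * t + u * v) ^ 2) := by
        rw [Real.sqrt_sq (by positivity)]
    _ ≤ Real.sqrt ((s * s + u * u) * (t * t + v * v)) := Real.sqrt_le_sqrt key
    _ = Real.sqrt (s * s + u * u) * Real.sqrt (t * t + v * v) := by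
        rw [Real.sqrt_mul (by positivity)]

lemma dot_abs_le (M : Matrix m m ℝ) (x y : m → ℝ) :
    |x ⬝ᵥ (M *ᵥ y)| ≤ (∑ i, ∑ j, |M i j|) * (Real.sqrt (x ⬝ᵥ x) * Real.sqrt (y ⬝ᵥ y)) := by
  have hx : ∀ i, |x i| ≤ Real.sqrt (x ⬝ᵥ x) := by
    intro i
    rw [show |x i| = Real.sqrt (x i ^ 2) from (Real.sqrt_sq_eq_abs _).symm]
    apply Real.sqrt_le_sqrt
    simpa [dotProduct, pow_two] using
      Finset.single_le_sum (f := fun j => x j * x j) (fun j _ => mul_self_nonneg _)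
        (Finset.mem_univ i)
  have hy : ∀ j, |y j| ≤ Real.sqrt (y ⬝ᵥ y) := by
    intro j
    rw [show |y j| = Real.sqrt (y j ^ 2) from (Real.sqrt_sq_eq_abs _).symm]
    apply Real.sqrt_le_sqrt
    simpa [dotProduct, pow_two] using
      Finset.single_le_sum (f := fun i => y i * y i) (fun i _ => mul_self_nonneg _)
        (Finset.mem_univ j)
  calc |x ⬝ᵥ (M *ᵥ y)| = |∑ i, ∑ j, x i * M i j * y j| := by
        simp only [dotProduct, mulVec]
        congr 1
        exact Finset.sum_congr rfl fun i _ => by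
          rw [Finset.mul_sum]
          exact Finset.sum_congr rfl fun j _ => by ring
    _ ≤ ∑ i, ∑ j, |x i * M i j * y j| := by
        refine (Finset.abs_sum_le_sum_abs _ _).trans ?_
        exact Finset.sum_le_sum fun i _ => Finset.abs_sum_le_sum_abs _ _
    _ ≤ ∑ i, ∑ j, |M i j| * (Real.sqrt (x ⬝ᵥ x) * Real.sqrt (y ⬝ᵥ y)) := by
        refine Finset.sum_le_sum fun i _ => Finset.sum_le_sum fun j _ => ?_
        rw [abs_mul, abs_mul]
        calc |x i| * |M i j| * |y j| = |M i j| * (|x i| * |y j|) := by ring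
          _ ≤ |M i j| * (Real.sqrt (x ⬝ᵥ x) * Real.sqrt (y ⬝ᵥ y)) := by
              refine mul_le_mul_of_nonneg_left ?_ (abs_nonneg _)
              exact mul_le_mul (hx i) (hy j) (abs_nonneg _) (Real.sqrt_nonneg _)
    _ = (∑ i, ∑ j, |M i j|) * (Real.sqrt (x ⬝ᵥ x) * Real.sqrt (y ⬝ᵥ y)) := by
        rw [Finset.sum_mul]
        exact Finset.sum_congr rfl fun i _ => by rw [Finset.sum_mul]

lemma conj_quad (A Z : Matrix m m ℝ) (x y : m → ℝ) :
    x ⬝ᵥ ((A * Z * Aᵀ) *ᵥ y) = (Aᵀ *ᵥ x) ⬝ᵥ (Z *ᵥ (Aᵀ *ᵥ y)) := by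
  rw [← mulVec_mulVec, ← mulVec_mulVec, dotProduct_mulVec, mulVec_transpose,
    mulVec_transpose]

lemma entry_eq_quad (Z : Matrix m m ℝ) (i j : m) :
    Z i j = (Pi.single i 1) ⬝ᵥ (Z *ᵥ (Pi.single j 1)) := by
  simp [dotProduct, mulVec, Pi.single_apply]

lemma conjT_psd {X : Matrix m m ℝ} (hX : X.PosSemidef) (B : Matrix m m ℝ) :
    (Bᵀ * X * B).PosSemidef := by
  have := hX.conjTranspose_mul_mul_same B
  rwa [conjTranspose_eq_transpose_of_trivial] at this

lemma conj_psd {X : Matrix m m ℝ} (hX : X.PosSemidef) (B : Matrix m m ℝ) :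
    (B * X * Bᵀ).PosSemidef := by
  have := hX.mul_mul_conjTranspose_same B
  rwa [conjTranspose_eq_transpose_of_trivial] at this

lemma trace_mono {X E E' : Matrix m m ℝ} (hX : X.PosSemidef)
    (h : (E' - E).PosSemidef) : (X * E).trace ≤ (X * E').trace := by
  have h0 := trace_mul_nonneg hX h
  rw [Matrix.mul_sub, Matrix.trace_sub] at h0
  linarith

end Stmt1Aux

open Stmt1Aux

/-- Lemma 1 of the paper (deterministic content). -/
theorem stmt_1 {n : ℕ} (A F : Matrix (Fin n) (Fin n) ℝ)
    (α β : ℝ) (hα0 : 0 < α) (hα1 : α ≤ 1) (hβ0 : 0 < β) (hβ1 : β ≤ 1)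
    (ε : ℝ) (hε : 0 < ε)
    (L0 : Matrix (Fin n) (Fin n) ℝ × Matrix (Fin n) (Fin n) ℝ →
          Matrix (Fin n) (Fin n) ℝ × Matrix (Fin n) (Fin n) ℝ)
    (hL0 : ∀ X Y, L0 (X, Y) =
      (A * ((1 - α) • X + α • Y) * Aᵀ, F * (β • X + (1 - β) • Y) * Fᵀ))
    (S R : ℕ → Matrix (Fin n) (Fin n) ℝ)
    (hS0 : S 0 = ε • (1 : Matrix (Fin n) (Fin n) ℝ))
    (hR0 : R 0 = ε • (1 : Matrix (Fin n) (Fin n) ℝ))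
    (hSrec : ∀ k, S (k + 1) =
      ε • (1 : Matrix (Fin n) (Fin n) ℝ) + (1 - α) • (Aᵀ * S k * A) + α • (Fᵀ * R k * F))
    (hRrec : ∀ k, R (k + 1) =
      ε • (1 : Matrix (Fin n) (Fin n) ℝ) + β • (Aᵀ * S k * A) + (1 - β) • (Fᵀ * R k * F))
    (Sstar Rstar : Matrix (Fin n) (Fin n) ℝ)
    (hSstarSymm : Sstar.IsSymm) (hRstarSymm : Rstar.IsSymm)
    (hSbound : ∀ k, (Sstar - S k).PosSemidef)
    (hRbound : ∀ k, (Rstar - R k).PosSemidef) :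
    ∀ M N : Matrix (Fin n) (Fin n) ℝ,
      Tendsto (fun k => L0^[k] (M, N)) atTop (𝓝 (0, 0)) := by
  intro M N
  have hα' : (0:ℝ) ≤ 1 - α := by linarith
  have hβ' : (0:ℝ) ≤ 1 - β := by linarith
  have epsPSD : (ε • (1 : Matrix (Fin n) (Fin n) ℝ)).PosSemidef := psd_smul .one hε.le
  -- the sequences dominate ε•1
  have hpsd : ∀ k, (S k - ε • (1:Matrix (Fin n) (Fin n) ℝ)).PosSemidef ∧ (R k - ε • (1:Matrix (Fin n) (Fin n) ℝ)).PosSemidef := by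
    intro k
    induction k with
    | zero =>
      rw [hS0, hR0, sub_self]
      exact ⟨.zero, .zero⟩
    | succ k ih =>
      have hSk : (S k).PosSemidef := by
        have h := ih.1.add epsPSD
        rwa [sub_add_cancel] at h
      have hRk : (R k).PosSemidef := by
        have h := ih.2.add epsPSD
        rwa [sub_add_cancel] at h
      constructor
      · rw [hSrec k]
        have : ε • (1:Matrix (Fin n) (Fin n) ℝ) + (1 - α) • (Aᵀ * S k * A) + α • (Fᵀ * R k * F) - ε • (1:Matrix (Fin n) (Fin n) ℝ)
            = (1 - α) • (Aᵀ * S k * A) + α • (Fᵀ * R k * F) := by abel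
        rw [this]
        exact (psd_smul (conjT_psd hSk A) hα').add (psd_smul (conjT_psd hRk F) hα0.le)
      · rw [hRrec k]
        have : ε • (1:Matrix (Fin n) (Fin n) ℝ) + β • (Aᵀ * S k * A) + (1 - β) • (Fᵀ * R k * F) - ε • (1:Matrix (Fin n) (Fin n) ℝ)
            = β • (Aᵀ * S k * A) + (1 - β) • (Fᵀ * R k * F) := by abel
        rw [this]
        exact (psd_smul (conjT_psd hSk A) hβ0.le).add (psd_smul (conjT_psd hRk F) hβ')
  have hSkpsd : ∀ k, (S k).PosSemidef := fun k => by
    have h := (hpsd k).1.add epsPSD; rwa [sub_add_cancel] at h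
  have hRkpsd : ∀ k, (R k).PosSemidef := fun k => by
    have h := (hpsd k).2.add epsPSD; rwa [sub_add_cancel] at h
  have hSstarPSD : Sstar.PosSemidef := by
    have h := (hSbound 0).add (hSkpsd 0); rwa [sub_add_cancel] at h
  have hRstarPSD : Rstar.PosSemidef := by
    have h := (hRbound 0).add (hRkpsd 0); rwa [sub_add_cancel] at h
  -- uniform scalar bound
  set C : ℝ := Sstar.trace + Rstar.trace + ε with hCdef
  have htrS : 0 ≤ Sstar.trace := psd_trace_nonneg hSstarPSD
  have htrR : 0 ≤ Rstar.trace := psd_trace_nonneg hRstarPSD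
  have hCpos : 0 < C := by simp only [hCdef]; linarith
  have hεC : ε ≤ C := by simp only [hCdef]; linarith
  have hCS : (C • (1:Matrix (Fin n) (Fin n) ℝ) - Sstar).PosSemidef := by
    have heq : C • (1:Matrix (Fin n) (Fin n) ℝ) - Sstar
        = (Sstar.trace • (1:Matrix (Fin n) (Fin n) ℝ) - Sstar) + (Rstar.trace + ε) • (1:Matrix (Fin n) (Fin n) ℝ) := by
      simp only [hCdef]; module
    rw [heq]
    exact (psd_trace_smul_one_sub hSstarPSD).add (psd_smul .one (by linarith))
  have hCR : (C • (1:Matrix (Fin n) (Fin n) ℝ) - Rstar).PosSemidef := by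
    have heq : C • (1:Matrix (Fin n) (Fin n) ℝ) - Rstar
        = (Rstar.trace • (1:Matrix (Fin n) (Fin n) ℝ) - Rstar) + (Sstar.trace + ε) • (1:Matrix (Fin n) (Fin n) ℝ) := by
      simp only [hCdef]; module
    rw [heq]
    exact (psd_trace_smul_one_sub hRstarPSD).add (psd_smul .one (by linarith))
  -- choose K
  set K : ℕ := ⌈C / ε⌉₊ + 1 with hKdef
  have hK1 : (1:ℝ) ≤ (K:ℝ) := by
    have h : (1:ℕ) ≤ K := by omega
    exact_mod_cast h
  have hKC : C ≤ (K:ℝ) * ε := by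
    have h1 : C / ε ≤ (⌈C / ε⌉₊ : ℝ) := Nat.le_ceil _
    have h2 : ((⌈C / ε⌉₊ : ℕ) : ℝ) ≤ (K:ℝ) := by
      simp only [hKdef]; push_cast; linarith
    have := h1.trans h2
    calc C = (C / ε) * ε := by field_simp
      _ ≤ (K:ℝ) * ε := by nlinarith
  have hKpos : (0:ℝ) < (K:ℝ) := lt_of_lt_of_le one_pos hK1
  have hKCpos : (0:ℝ) < (K:ℝ) * C := by positivity
  -- averaged (unnormalized) matrices
  set P : Matrix (Fin n) (Fin n) ℝ := ∑ k ∈ Finset.range K, S k with hPdef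
  set Q : Matrix (Fin n) (Fin n) ℝ := ∑ k ∈ Finset.range K, R k with hQdef
  have hPlow : (P - ε • (1:Matrix (Fin n) (Fin n) ℝ)).PosSemidef := by
    have heq : P - ε • (1:Matrix (Fin n) (Fin n) ℝ)
        = (∑ k ∈ Finset.range K, (S k - ε • (1:Matrix (Fin n) (Fin n) ℝ))) + (((K:ℝ) - 1) * ε) • (1:Matrix (Fin n) (Fin n) ℝ) := by
      rw [Finset.sum_sub_distrib, Finset.sum_const, Finset.card_range,
        ← Nat.cast_smul_eq_nsmul ℝ]
      simp only [hPdef]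
      module
    rw [heq]
    exact (psd_sum _ _ fun k _ => (hpsd k).1).add
      (psd_smul .one (by nlinarith))
  have hQlow : (Q - ε • (1:Matrix (Fin n) (Fin n) ℝ)).PosSemidef := by
    have heq : Q - ε • (1:Matrix (Fin n) (Fin n) ℝ)
        = (∑ k ∈ Finset.range K, (R k - ε • (1:Matrix (Fin n) (Fin n) ℝ))) + (((K:ℝ) - 1) * ε) • (1:Matrix (Fin n) (Fin n) ℝ) := by
      rw [Finset.sum_sub_distrib, Finset.sum_const, Finset.card_range,
        ← Nat.cast_smul_eq_nsmul ℝ]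
      simp only [hQdef]
      module
    rw [heq]
    exact (psd_sum _ _ fun k _ => (hpsd k).2).add
      (psd_smul .one (by nlinarith))
  have hPpsd : P.PosSemidef := psd_sum _ _ fun k _ => hSkpsd k
  have hQpsd : Q.PosSemidef := psd_sum _ _ fun k _ => hRkpsd k
  have hPup : (((K:ℝ) * C) • (1:Matrix (Fin n) (Fin n) ℝ) - P).PosSemidef := by
    have heq : ((K:ℝ) * C) • (1:Matrix (Fin n) (Fin n) ℝ) - P
        = ∑ k ∈ Finset.range K, (C • (1:Matrix (Fin n) (Fin n) ℝ) - S k) := by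
      rw [Finset.sum_sub_distrib, Finset.sum_const, Finset.card_range,
        ← Nat.cast_smul_eq_nsmul ℝ]
      simp only [hPdef]
      module
    rw [heq]
    refine psd_sum _ _ fun k _ => ?_
    have heq2 : C • (1:Matrix (Fin n) (Fin n) ℝ) - S k = (C • (1:Matrix (Fin n) (Fin n) ℝ) - Sstar) + (Sstar - S k) := by abel
    rw [heq2]; exact hCS.add (hSbound k)
  have hQup : (((K:ℝ) * C) • (1:Matrix (Fin n) (Fin n) ℝ) - Q).PosSemidef := by
    have heq : ((K:ℝ) * C) • (1:Matrix (Fin n) (Fin n) ℝ) - Q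
        = ∑ k ∈ Finset.range K, (C • (1:Matrix (Fin n) (Fin n) ℝ) - R k) := by
      rw [Finset.sum_sub_distrib, Finset.sum_const, Finset.card_range,
        ← Nat.cast_smul_eq_nsmul ℝ]
      simp only [hQdef]
      module
    rw [heq]
    refine psd_sum _ _ fun k _ => ?_
    have heq2 : C • (1:Matrix (Fin n) (Fin n) ℝ) - R k = (C • (1:Matrix (Fin n) (Fin n) ℝ) - Rstar) + (Rstar - R k) := by abel
    rw [heq2]; exact hCR.add (hRbound k)
  -- telescoping identities
  have tele : ∀ (T : ℕ → Matrix (Fin n) (Fin n) ℝ), ∑ k ∈ Finset.range K, T (k+1)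
      = (∑ k ∈ Finset.range K, T k) + T K - T 0 := by
    intro T
    have h1 : (∑ k ∈ Finset.range K, T (k+1)) + T 0 = ∑ k ∈ Finset.range (K+1), T k :=
      (Finset.sum_range_succ' T K).symm
    have h2 : ∑ k ∈ Finset.range (K+1), T k = (∑ k ∈ Finset.range K, T k) + T K :=
      Finset.sum_range_succ T K
    rw [h2] at h1
    exact eq_sub_of_add_eq h1
  have hAPA : Aᵀ * P * A = ∑ k ∈ Finset.range K, Aᵀ * S k * A := by
    simp only [hPdef, Finset.mul_sum, Finset.sum_mul]
  have hFQF : Fᵀ * Q * F = ∑ k ∈ Finset.range K, Fᵀ * R k * F := by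
    simp only [hQdef, Finset.mul_sum, Finset.sum_mul]
  have hE1 : (1 - α) • (Aᵀ * P * A) + α • (Fᵀ * Q * F)
      = P + (S K - ε • (1:Matrix (Fin n) (Fin n) ℝ)) - ((K:ℝ) * ε) • (1:Matrix (Fin n) (Fin n) ℝ) := by
    rw [hAPA, hFQF, Finset.smul_sum, Finset.smul_sum, ← Finset.sum_add_distrib]
    have step : ∀ k, (1 - α) • (Aᵀ * S k * A) + α • (Fᵀ * R k * F)
        = S (k+1) - ε • (1:Matrix (Fin n) (Fin n) ℝ) := by
      intro k; rw [hSrec k]; abel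
    rw [Finset.sum_congr rfl fun k _ => step k, Finset.sum_sub_distrib,
      tele S, Finset.sum_const, Finset.card_range, ← Nat.cast_smul_eq_nsmul ℝ, hS0]
    simp only [hPdef]
    module
  have hE2 : β • (Aᵀ * P * A) + (1 - β) • (Fᵀ * Q * F)
      = Q + (R K - ε • (1:Matrix (Fin n) (Fin n) ℝ)) - ((K:ℝ) * ε) • (1:Matrix (Fin n) (Fin n) ℝ) := by
    rw [hAPA, hFQF, Finset.smul_sum, Finset.smul_sum, ← Finset.sum_add_distrib]
    have step : ∀ k, β • (Aᵀ * S k * A) + (1 - β) • (Fᵀ * R k * F)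
        = R (k+1) - ε • (1:Matrix (Fin n) (Fin n) ℝ) := by
      intro k; rw [hRrec k]; abel
    rw [Finset.sum_congr rfl fun k _ => step k, Finset.sum_sub_distrib,
      tele R, Finset.sum_const, Finset.card_range, ← Nat.cast_smul_eq_nsmul ℝ, hR0]
    simp only [hQdef]
    module
  -- the contraction factor
  set ρ : ℝ := 1 - ε / (2 * ((K:ℝ) * C)) with hρdef
  have hρ0 : 0 ≤ ρ := by
    have h1 : ε / (2 * ((K:ℝ) * C)) ≤ 1 := by
      rw [div_le_one (by positivity)]
      nlinarith
    simp only [hρdef]; linarith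
  have hρ1 : ρ < 1 := by
    have h1 : 0 < ε / (2 * ((K:ℝ) * C)) := by positivity
    simp only [hρdef]; linarith
  have hKCne : (K:ℝ) * C ≠ 0 := ne_of_gt hKCpos
  have hcontr1 : (ρ • P - ((1 - α) • (Aᵀ * P * A) + α • (Fᵀ * Q * F))).PosSemidef := by
    have heq : ρ • P - ((1 - α) • (Aᵀ * P * A) + α • (Fᵀ * Q * F))
        = (ε / (2 * ((K:ℝ) * C))) • (((K:ℝ) * C) • (1:Matrix (Fin n) (Fin n) ℝ) - P)
          + ((((K:ℝ) * ε + ε / 2 - C)) • (1:Matrix (Fin n) (Fin n) ℝ) + ((C • (1:Matrix (Fin n) (Fin n) ℝ) - Sstar) + (Sstar - S K))) := by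
      rw [hE1, hρdef]
      match_scalars <;> field_simp <;> ring
    rw [heq]
    refine (psd_smul hPup (by positivity)).add ((psd_smul .one (by linarith)).add
      (hCS.add (hSbound K)))
  have hcontr2 : (ρ • Q - (β • (Aᵀ * P * A) + (1 - β) • (Fᵀ * Q * F))).PosSemidef := by
    have heq : ρ • Q - (β • (Aᵀ * P * A) + (1 - β) • (Fᵀ * Q * F))
        = (ε / (2 * ((K:ℝ) * C))) • (((K:ℝ) * C) • (1:Matrix (Fin n) (Fin n) ℝ) - Q)
          + ((((K:ℝ) * ε + ε / 2 - C)) • (1:Matrix (Fin n) (Fin n) ℝ) + ((C • (1:Matrix (Fin n) (Fin n) ℝ) - Rstar) + (Rstar - R K))) := by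
      rw [hE2, hρdef]
      match_scalars <;> field_simp <;> ring
    rw [heq]
    refine (psd_smul hQup (by positivity)).add ((psd_smul .one (by linarith)).add
      (hCR.add (hRbound K)))
  -- iterates: generic component formulas
  have hiter : ∀ (p : Matrix (Fin n) (Fin n) ℝ × Matrix (Fin n) (Fin n) ℝ) (k : ℕ),
      (L0^[k+1] p).1 = A * ((1 - α) • (L0^[k] p).1 + α • (L0^[k] p).2) * Aᵀ ∧
      (L0^[k+1] p).2 = F * (β • (L0^[k] p).1 + (1 - β) • (L0^[k] p).2) * Fᵀ := by
    intro p k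
    rw [Function.iterate_succ_apply']
    have h : L0 (L0^[k] p) =
        (A * ((1 - α) • (L0^[k] p).1 + α • (L0^[k] p).2) * Aᵀ,
         F * (β • (L0^[k] p).1 + (1 - β) • (L0^[k] p).2) * Fᵀ) :=
      hL0 (L0^[k] p).1 (L0^[k] p).2
    rw [h]
    exact ⟨rfl, rfl⟩
  -- iterates of (1,1)
  set G : ℕ → Matrix (Fin n) (Fin n) ℝ × Matrix (Fin n) (Fin n) ℝ := fun k => L0^[k] ((1:Matrix (Fin n) (Fin n) ℝ), (1:Matrix (Fin n) (Fin n) ℝ)) with hGdef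
  have hGpsd : ∀ k, (G k).1.PosSemidef ∧ (G k).2.PosSemidef := by
    intro k
    induction k with
    | zero => exact ⟨.one, .one⟩
    | succ k ih =>
      have h := hiter ((1:Matrix (Fin n) (Fin n) ℝ), (1:Matrix (Fin n) (Fin n) ℝ)) k
      constructor
      · rw [show (G (k+1)).1 = _ from h.1]
        exact conj_psd ((psd_smul ih.1 hα').add (psd_smul ih.2 hα0.le)) A
      · rw [show (G (k+1)).2 = _ from h.2]
        exact conj_psd ((psd_smul ih.1 hβ0.le).add (psd_smul ih.2 hβ')) F
  -- Lyapunov function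
  set V : ℕ → ℝ := fun k => β * ((G k).1 * P).trace + α * ((G k).2 * Q).trace with hVdef
  have cycA : ∀ (Z : Matrix (Fin n) (Fin n) ℝ), ((A * Z * Aᵀ) * P).trace = (Z * (Aᵀ * P * A)).trace := by
    intro Z
    calc ((A * Z * Aᵀ) * P).trace = ((A * Z) * (Aᵀ * P)).trace := by rw [Matrix.mul_assoc]
      _ = ((Aᵀ * P) * (A * Z)).trace := Matrix.trace_mul_comm _ _
      _ = ((Aᵀ * P * A) * Z).trace := by rw [← Matrix.mul_assoc]
      _ = (Z * (Aᵀ * P * A)).trace := Matrix.trace_mul_comm _ _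
  have cycF : ∀ (Z : Matrix (Fin n) (Fin n) ℝ), ((F * Z * Fᵀ) * Q).trace = (Z * (Fᵀ * Q * F)).trace := by
    intro Z
    calc ((F * Z * Fᵀ) * Q).trace = ((F * Z) * (Fᵀ * Q)).trace := by rw [Matrix.mul_assoc]
      _ = ((Fᵀ * Q) * (F * Z)).trace := Matrix.trace_mul_comm _ _
      _ = ((Fᵀ * Q * F) * Z).trace := by rw [← Matrix.mul_assoc]
      _ = (Z * (Fᵀ * Q * F)).trace := Matrix.trace_mul_comm _ _
  have hVstep : ∀ k, V (k+1) ≤ ρ * V k := by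
    intro k
    have h := hiter ((1:Matrix (Fin n) (Fin n) ℝ), (1:Matrix (Fin n) (Fin n) ℝ)) k
    set X := (G k).1; set Y := (G k).2
    have hX : X.PosSemidef := (hGpsd k).1
    have hY : Y.PosSemidef := (hGpsd k).2
    have e1 : ((G (k+1)).1 * P).trace
        = (X * ((1 - α) • (Aᵀ * P * A) + α • (Fᵀ * Q * F))).trace
          + α * (Y * (Aᵀ * P * A)).trace - α * (X * (Fᵀ * Q * F)).trace := by
      rw [show (G (k+1)).1 = _ from h.1, cycA]
      simp only [Matrix.add_mul, Matrix.smul_mul, Matrix.mul_add, Matrix.mul_smul,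
        Matrix.trace_add, Matrix.trace_smul, smul_eq_mul]
      ring
    have e2 : ((G (k+1)).2 * Q).trace
        = (Y * (β • (Aᵀ * P * A) + (1 - β) • (Fᵀ * Q * F))).trace
          + β * (X * (Fᵀ * Q * F)).trace - β * (Y * (Aᵀ * P * A)).trace := by
      rw [show (G (k+1)).2 = _ from h.2, cycF]
      simp only [Matrix.add_mul, Matrix.smul_mul, Matrix.mul_add, Matrix.mul_smul,
        Matrix.trace_add, Matrix.trace_smul, smul_eq_mul]
      ring
    have b1 : (X * ((1 - α) • (Aᵀ * P * A) + α • (Fᵀ * Q * F))).trace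
        ≤ ρ * (X * P).trace := by
      have := trace_mono hX hcontr1
      rwa [Matrix.mul_smul, Matrix.trace_smul, smul_eq_mul] at this
    have b2 : (Y * (β • (Aᵀ * P * A) + (1 - β) • (Fᵀ * Q * F))).trace
        ≤ ρ * (Y * Q).trace := by
      have := trace_mono hY hcontr2
      rwa [Matrix.mul_smul, Matrix.trace_smul, smul_eq_mul] at this
    have expand : V (k+1) = β * ((G (k+1)).1 * P).trace + α * ((G (k+1)).2 * Q).trace := rfl
    rw [expand, e1, e2]
    have goal2 : β * ((X * ((1 - α) • (Aᵀ * P * A) + α • (Fᵀ * Q * F))).trace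
          + α * (Y * (Aᵀ * P * A)).trace - α * (X * (Fᵀ * Q * F)).trace)
        + α * ((Y * (β • (Aᵀ * P * A) + (1 - β) • (Fᵀ * Q * F))).trace
          + β * (X * (Fᵀ * Q * F)).trace - β * (Y * (Aᵀ * P * A)).trace)
        = β * (X * ((1 - α) • (Aᵀ * P * A) + α • (Fᵀ * Q * F))).trace
          + α * (Y * (β • (Aᵀ * P * A) + (1 - β) • (Fᵀ * Q * F))).trace := by ring
    rw [goal2]
    have : ρ * V k = β * (ρ * (X * P).trace) + α * (ρ * (Y * Q).trace) := by
      rw [hVdef]; ring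
    rw [this]
    exact add_le_add (mul_le_mul_of_nonneg_left b1 hβ0.le)
      (mul_le_mul_of_nonneg_left b2 hα0.le)
  have hVgeo : ∀ k, V k ≤ ρ^k * V 0 := by
    intro k
    induction k with
    | zero => simp
    | succ k ih =>
      calc V (k+1) ≤ ρ * V k := hVstep k
        _ ≤ ρ * (ρ^k * V 0) := mul_le_mul_of_nonneg_left ih hρ0
        _ = ρ^(k+1) * V 0 := by ring
  -- trace bounds
  have htrX : ∀ k, (G k).1.trace ≤ ρ^k * V 0 / (ε * β) := by
    intro k
    have hX := (hGpsd k).1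
    have hY := (hGpsd k).2
    have h1 : ε * (G k).1.trace ≤ ((G k).1 * P).trace := by
      have := trace_mono hX hPlow
      rwa [Matrix.mul_smul, Matrix.mul_one, Matrix.trace_smul, smul_eq_mul] at this
    have h2 : 0 ≤ ((G k).2 * Q).trace := trace_mul_nonneg hY hQpsd
    have h3 : β * ((G k).1 * P).trace ≤ V k := by
      have hVk : V k = β * ((G k).1 * P).trace + α * ((G k).2 * Q).trace := rfl
      rw [hVk]
      nlinarith
    have h4 := (h3.trans (hVgeo k))
    rw [le_div_iff₀ (by positivity)]
    nlinarith
  have htrY : ∀ k, (G k).2.trace ≤ ρ^k * V 0 / (ε * α) := by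
    intro k
    have hX := (hGpsd k).1
    have hY := (hGpsd k).2
    have h1 : ε * (G k).2.trace ≤ ((G k).2 * Q).trace := by
      have := trace_mono hY hQlow
      rwa [Matrix.mul_smul, Matrix.mul_one, Matrix.trace_smul, smul_eq_mul] at this
    have h2 : 0 ≤ ((G k).1 * P).trace := trace_mul_nonneg hX hPpsd
    have h3 : α * ((G k).2 * Q).trace ≤ V k := by
      have hVk : V k = β * ((G k).1 * P).trace + α * ((G k).2 * Q).trace := rfl
      rw [hVk]
      nlinarith
    have h4 := (h3.trans (hVgeo k))
    rw [le_div_iff₀ (by positivity)]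
    nlinarith
  -- key Cauchy-Schwarz induction
  set c : ℝ := (∑ i, ∑ j, |M i j|) + (∑ i, ∑ j, |N i j|) with hcdef
  have hcM : (∑ i, ∑ j, |M i j|) ≤ c := by
    simp only [hcdef]
    have : (0:ℝ) ≤ ∑ i, ∑ j, |N i j| :=
      Finset.sum_nonneg fun i _ => Finset.sum_nonneg fun j _ => abs_nonneg _
    linarith
  have hcN : (∑ i, ∑ j, |N i j|) ≤ c := by
    simp only [hcdef]
    have : (0:ℝ) ≤ ∑ i, ∑ j, |M i j| :=
      Finset.sum_nonneg fun i _ => Finset.sum_nonneg fun j _ => abs_nonneg _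
    linarith
  have hc0 : 0 ≤ c := by
    simp only [hcdef]
    have h1 : (0:ℝ) ≤ ∑ i, ∑ j, |M i j| :=
      Finset.sum_nonneg fun i _ => Finset.sum_nonneg fun j _ => abs_nonneg _
    have h2 : (0:ℝ) ≤ ∑ i, ∑ j, |N i j| :=
      Finset.sum_nonneg fun i _ => Finset.sum_nonneg fun j _ => abs_nonneg _
    linarith
  have hkey : ∀ k (x y : Fin n → ℝ),
      |x ⬝ᵥ ((L0^[k] (M, N)).1 *ᵥ y)| ≤
        c * (Real.sqrt (x ⬝ᵥ ((G k).1 *ᵥ x)) * Real.sqrt (y ⬝ᵥ ((G k).1 *ᵥ y))) ∧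
      |x ⬝ᵥ ((L0^[k] (M, N)).2 *ᵥ y)| ≤
        c * (Real.sqrt (x ⬝ᵥ ((G k).2 *ᵥ x)) * Real.sqrt (y ⬝ᵥ ((G k).2 *ᵥ y))) := by
    intro k
    induction k with
    | zero =>
      intro x y
      have hG0 : G 0 = ((1:Matrix (Fin n) (Fin n) ℝ), (1:Matrix (Fin n) (Fin n) ℝ)) := rfl
      have hL00 : L0^[0] (M, N) = (M, N) := rfl
      rw [hG0, hL00]
      simp only [one_mulVec]
      constructor
      · exact (dot_abs_le M x y).trans
          (mul_le_mul_of_nonneg_right hcM (by positivity))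
      · exact (dot_abs_le N x y).trans
          (mul_le_mul_of_nonneg_right hcN (by positivity))
    | succ k ih =>
      intro x y
      have hMN := hiter (M, N) k
      have hG := hiter ((1:Matrix (Fin n) (Fin n) ℝ), (1:Matrix (Fin n) (Fin n) ℝ)) k
      set Xk := (L0^[k] (M, N)).1; set Yk := (L0^[k] (M, N)).2
      set GX := (G k).1; set GY := (G k).2
      have hGX : GX.PosSemidef := (hGpsd k).1
      have hGY : GY.PosSemidef := (hGpsd k).2
      constructor
      · -- first component, conjugation by A
        set u := Aᵀ *ᵥ x; set v := Aᵀ *ᵥ y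
        have q1 : x ⬝ᵥ ((L0^[k+1] (M, N)).1 *ᵥ y)
            = (1 - α) * (u ⬝ᵥ (Xk *ᵥ v)) + α * (u ⬝ᵥ (Yk *ᵥ v)) := by
          rw [show (L0^[k+1] (M, N)).1 = _ from hMN.1, conj_quad]
          simp only [add_mulVec, smul_mulVec, dotProduct_add, dotProduct_smul,
            smul_eq_mul]
          rfl
        have q2 : ∀ z : Fin n → ℝ, z ⬝ᵥ ((G (k+1)).1 *ᵥ z)
            = (1 - α) * ((Aᵀ *ᵥ z) ⬝ᵥ (GX *ᵥ (Aᵀ *ᵥ z)))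
              + α * ((Aᵀ *ᵥ z) ⬝ᵥ (GY *ᵥ (Aᵀ *ᵥ z))) := by
          intro z
          rw [show (G (k+1)).1 = _ from hG.1, conj_quad]
          simp only [add_mulVec, smul_mulVec, dotProduct_add, dotProduct_smul,
            smul_eq_mul]
        have i1 := (ih u v).1
        have i2 := (ih u v).2
        have nn1 : 0 ≤ u ⬝ᵥ (GX *ᵥ u) := psd_quad hGX u
        have nn2 : 0 ≤ u ⬝ᵥ (GY *ᵥ u) := psd_quad hGY u
        have nn3 : 0 ≤ v ⬝ᵥ (GX *ᵥ v) := psd_quad hGX v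
        have nn4 : 0 ≤ v ⬝ᵥ (GY *ᵥ v) := psd_quad hGY v
        rw [q1, q2 x, q2 y]
        calc |(1 - α) * (u ⬝ᵥ (Xk *ᵥ v)) + α * (u ⬝ᵥ (Yk *ᵥ v))|
            ≤ (1 - α) * |u ⬝ᵥ (Xk *ᵥ v)| + α * |u ⬝ᵥ (Yk *ᵥ v)| := by
              refine (abs_add_le _ _).trans ?_
              rw [abs_mul, abs_mul, abs_of_nonneg hα', abs_of_nonneg hα0.le]
          _ ≤ (1 - α) * (c * (Real.sqrt (u ⬝ᵥ (GX *ᵥ u)) * Real.sqrt (v ⬝ᵥ (GX *ᵥ v))))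
              + α * (c * (Real.sqrt (u ⬝ᵥ (GY *ᵥ u)) * Real.sqrt (v ⬝ᵥ (GY *ᵥ v)))) :=
              add_le_add (mul_le_mul_of_nonneg_left i1 hα')
                (mul_le_mul_of_nonneg_left i2 hα0.le)
          _ = c * ((1 - α) * (Real.sqrt (u ⬝ᵥ (GX *ᵥ u)) * Real.sqrt (v ⬝ᵥ (GX *ᵥ v)))
              + α * (Real.sqrt (u ⬝ᵥ (GY *ᵥ u)) * Real.sqrt (v ⬝ᵥ (GY *ᵥ v)))) := by ring
          _ ≤ c * (Real.sqrt ((1 - α) * (u ⬝ᵥ (GX *ᵥ u)) + α * (u ⬝ᵥ (GY *ᵥ u)))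
              * Real.sqrt ((1 - α) * (v ⬝ᵥ (GX *ᵥ v)) + α * (v ⬝ᵥ (GY *ᵥ v)))) := by
              exact mul_le_mul_of_nonneg_left
                (two_cs hα' hα0.le nn1 nn2 nn3 nn4) hc0
      · -- second component, conjugation by F
        set u := Fᵀ *ᵥ x; set v := Fᵀ *ᵥ y
        have q1 : x ⬝ᵥ ((L0^[k+1] (M, N)).2 *ᵥ y)
            = β * (u ⬝ᵥ (Xk *ᵥ v)) + (1 - β) * (u ⬝ᵥ (Yk *ᵥ v)) := by
          rw [show (L0^[k+1] (M, N)).2 = _ from hMN.2, conj_quad]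
          simp only [add_mulVec, smul_mulVec, dotProduct_add, dotProduct_smul,
            smul_eq_mul]
          rfl
        have q2 : ∀ z : Fin n → ℝ, z ⬝ᵥ ((G (k+1)).2 *ᵥ z)
            = β * ((Fᵀ *ᵥ z) ⬝ᵥ (GX *ᵥ (Fᵀ *ᵥ z)))
              + (1 - β) * ((Fᵀ *ᵥ z) ⬝ᵥ (GY *ᵥ (Fᵀ *ᵥ z))) := by
          intro z
          rw [show (G (k+1)).2 = _ from hG.2, conj_quad]
          simp only [add_mulVec, smul_mulVec, dotProduct_add, dotProduct_smul,
            smul_eq_mul]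
        have i1 := (ih u v).1
        have i2 := (ih u v).2
        have nn1 : 0 ≤ u ⬝ᵥ (GX *ᵥ u) := psd_quad hGX u
        have nn2 : 0 ≤ u ⬝ᵥ (GY *ᵥ u) := psd_quad hGY u
        have nn3 : 0 ≤ v ⬝ᵥ (GX *ᵥ v) := psd_quad hGX v
        have nn4 : 0 ≤ v ⬝ᵥ (GY *ᵥ v) := psd_quad hGY v
        rw [q1, q2 x, q2 y]
        calc |β * (u ⬝ᵥ (Xk *ᵥ v)) + (1 - β) * (u ⬝ᵥ (Yk *ᵥ v))|
            ≤ β * |u ⬝ᵥ (Xk *ᵥ v)| + (1 - β) * |u ⬝ᵥ (Yk *ᵥ v)| := by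
              refine (abs_add_le _ _).trans ?_
              rw [abs_mul, abs_mul, abs_of_nonneg hβ0.le, abs_of_nonneg hβ']
          _ ≤ β * (c * (Real.sqrt (u ⬝ᵥ (GX *ᵥ u)) * Real.sqrt (v ⬝ᵥ (GX *ᵥ v))))
              + (1 - β) * (c * (Real.sqrt (u ⬝ᵥ (GY *ᵥ u)) * Real.sqrt (v ⬝ᵥ (GY *ᵥ v)))) :=
              add_le_add (mul_le_mul_of_nonneg_left i1 hβ0.le)
                (mul_le_mul_of_nonneg_left i2 hβ')
          _ = c * (β * (Real.sqrt (u ⬝ᵥ (GX *ᵥ u)) * Real.sqrt (v ⬝ᵥ (GX *ᵥ v)))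
              + (1 - β) * (Real.sqrt (u ⬝ᵥ (GY *ᵥ u)) * Real.sqrt (v ⬝ᵥ (GY *ᵥ v)))) := by ring
          _ ≤ c * (Real.sqrt (β * (u ⬝ᵥ (GX *ᵥ u)) + (1 - β) * (u ⬝ᵥ (GY *ᵥ u)))
              * Real.sqrt (β * (v ⬝ᵥ (GX *ᵥ v)) + (1 - β) * (v ⬝ᵥ (GY *ᵥ v)))) := by
              exact mul_le_mul_of_nonneg_left
                (two_cs hβ0.le hβ' nn1 nn2 nn3 nn4) hc0
  -- entrywise bounds
  have entry1 : ∀ k (i j : Fin n),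
      |(L0^[k] (M, N)).1 i j| ≤ c * (ρ^k * V 0 / (ε * β)) := by
    intro k i j
    have h := (hkey k (Pi.single i 1) (Pi.single j 1)).1
    rw [← entry_eq_quad] at h
    have hdi : Pi.single i 1 ⬝ᵥ ((G k).1 *ᵥ Pi.single i 1) = (G k).1 i i :=
      (entry_eq_quad _ i i).symm
    have hdj : Pi.single j 1 ⬝ᵥ ((G k).1 *ᵥ Pi.single j 1) = (G k).1 j j :=
      (entry_eq_quad _ j j).symm
    rw [hdi, hdj] at h
    refine h.trans ?_
    have hX := (hGpsd k).1
    have htr : 0 ≤ (G k).1.trace := psd_trace_nonneg hX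
    have hb : Real.sqrt ((G k).1 i i) * Real.sqrt ((G k).1 j j) ≤ (G k).1.trace := by
      calc Real.sqrt ((G k).1 i i) * Real.sqrt ((G k).1 j j)
          ≤ Real.sqrt ((G k).1.trace) * Real.sqrt ((G k).1.trace) :=
            mul_le_mul (Real.sqrt_le_sqrt (psd_diag_le_trace hX i))
              (Real.sqrt_le_sqrt (psd_diag_le_trace hX j)) (Real.sqrt_nonneg _)
              (Real.sqrt_nonneg _)
        _ = (G k).1.trace := Real.mul_self_sqrt htr
    exact mul_le_mul_of_nonneg_left (hb.trans (htrX k)) hc0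
  have entry2 : ∀ k (i j : Fin n),
      |(L0^[k] (M, N)).2 i j| ≤ c * (ρ^k * V 0 / (ε * α)) := by
    intro k i j
    have h := (hkey k (Pi.single i 1) (Pi.single j 1)).2
    rw [← entry_eq_quad] at h
    have hdi : Pi.single i 1 ⬝ᵥ ((G k).2 *ᵥ Pi.single i 1) = (G k).2 i i :=
      (entry_eq_quad _ i i).symm
    have hdj : Pi.single j 1 ⬝ᵥ ((G k).2 *ᵥ Pi.single j 1) = (G k).2 j j :=
      (entry_eq_quad _ j j).symm
    rw [hdi, hdj] at h
    refine h.trans ?_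
    have hY := (hGpsd k).2
    have htr : 0 ≤ (G k).2.trace := psd_trace_nonneg hY
    have hb : Real.sqrt ((G k).2 i i) * Real.sqrt ((G k).2 j j) ≤ (G k).2.trace := by
      calc Real.sqrt ((G k).2 i i) * Real.sqrt ((G k).2 j j)
          ≤ Real.sqrt ((G k).2.trace) * Real.sqrt ((G k).2.trace) :=
            mul_le_mul (Real.sqrt_le_sqrt (psd_diag_le_trace hY i))
              (Real.sqrt_le_sqrt (psd_diag_le_trace hY j)) (Real.sqrt_nonneg _)
              (Real.sqrt_nonneg _)
        _ = (G k).2.trace := Real.mul_self_sqrt htr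
    exact mul_le_mul_of_nonneg_left (hb.trans (htrY k)) hc0
  -- geometric convergence
  have hgeo : ∀ (d : ℝ), Tendsto (fun k => d * ρ^k) atTop (𝓝 0) := by
    intro d
    have h := tendsto_pow_atTop_nhds_zero_of_lt_one hρ0 hρ1
    simpa using h.const_mul d
  have hcomp1 : Tendsto (fun k => (L0^[k] (M, N)).1) atTop (𝓝 (0 : Matrix (Fin n) (Fin n) ℝ)) := by
    apply tendsto_pi_nhds.2
    intro i
    apply tendsto_pi_nhds.2
    intro j
    have hb : ∀ k, ‖(L0^[k] (M, N)).1 i j‖ ≤ (c * (V 0 / (ε * β))) * ρ^k := by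
      intro k
      rw [Real.norm_eq_abs]
      calc |(L0^[k] (M, N)).1 i j| ≤ c * (ρ^k * V 0 / (ε * β)) := entry1 k i j
        _ = (c * (V 0 / (ε * β))) * ρ^k := by ring
    exact squeeze_zero_norm hb (hgeo _)
  have hcomp2 : Tendsto (fun k => (L0^[k] (M, N)).2) atTop (𝓝 (0 : Matrix (Fin n) (Fin n) ℝ)) := by
    apply tendsto_pi_nhds.2
    intro i
    apply tendsto_pi_nhds.2
    intro j
    have hb : ∀ k, ‖(L0^[k] (M, N)).2 i j‖ ≤ (c * (V 0 / (ε * α))) * ρ^k := by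
      intro k
      rw [Real.norm_eq_abs]
      calc |(L0^[k] (M, N)).2 i j| ≤ c * (ρ^k * V 0 / (ε * α)) := entry2 k i j
        _ = (c * (V 0 / (ε * α))) * ρ^k := by ring
    exact squeeze_zero_norm hb (hgeo _)
  exact hcomp1.prodMk_nhds hcomp2
end

section
/- Let A ∈ ℝ^{n×n}, B ∈ ℝ^{n×p}, L ∈ ℝ^{p×n}, set F = A + BL, let 0 < α ≤ 1 and 0 < β ≤ 1 with ᾱ = 1−α and β̄ = 1−β, let ε > 0, let W be a real symmetric n×n matrix with εI ⪯ W, and let U be a real positive semidefinite p×p matrix. Define 𝒮̄₀ = ℛ̄₀ = εI and 𝒮̄_{k+1} = W + αLᵀUL + ᾱAᵀ𝒮̄ₖA + αFᵀℛ̄ₖF, ℛ̄_{k+1} = W + β̄LᵀUL + βAᵀ𝒮̄ₖA + β̄Fᵀℛ̄ₖF. Then both sequences are monotone nondecreasing in the Loewner order: 𝒮̄ₖ ⪯ 𝒮̄_{k+1} and ℛ̄ₖ ⪯ ℛ̄_{k+1} for every k. (This is the monotonicity step in the proof of Lemma 1 of the paper.) -/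
open Matrix

lemma psd_smul_aux {n : ℕ} {c : ℝ} (hc : 0 ≤ c) {M : Matrix (Fin n) (Fin n) ℝ}
    (hM : M.PosSemidef) : (c • M).PosSemidef := by
  constructor
  · simp only [Matrix.IsHermitian, conjTranspose_smul, star_trivial, hM.1.eq]
  · intro x
    have := hM.2 x
    simp only [Matrix.smul_apply, smul_eq_mul, Finsupp.sum] at this ⊢
    convert mul_nonneg hc this using 1
    simp only [Finset.mul_sum]
    refine Finset.sum_congr rfl fun i _ => Finset.sum_congr rfl fun j _ => by ring

lemma psd_conj_aux {m n : ℕ} {M : Matrix (Fin m) (Fin m) ℝ} (hM : M.PosSemidef)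
    (C : Matrix (Fin m) (Fin n) ℝ) : (Cᵀ * M * C).PosSemidef := by
  have := hM.conjTranspose_mul_mul_same C
  simpa [conjTranspose_eq_transpose_of_trivial] using this

/-- The monotonicity step in the proof of Lemma 1 of the paper: the
cost-driven Riccati-type sequences `𝒮̄ₖ, ℛ̄ₖ` are monotone nondecreasing in
the Loewner order. -/
theorem stmt_3 {n p : ℕ} (A : Matrix (Fin n) (Fin n) ℝ)
    (B : Matrix (Fin n) (Fin p) ℝ) (L : Matrix (Fin p) (Fin n) ℝ)
    (F : Matrix (Fin n) (Fin n) ℝ) (hF : F = A + B * L)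
    (α β : ℝ) (hα0 : 0 < α) (hα1 : α ≤ 1) (hβ0 : 0 < β) (hβ1 : β ≤ 1)
    (ε : ℝ) (hε : 0 < ε)
    (W : Matrix (Fin n) (Fin n) ℝ) (hWsymm : W.IsSymm)
    (hWge : (W - ε • (1 : Matrix (Fin n) (Fin n) ℝ)).PosSemidef)
    (U : Matrix (Fin p) (Fin p) ℝ) (hU : U.PosSemidef)
    (Sbar Rbar : ℕ → Matrix (Fin n) (Fin n) ℝ)
    (hSbar0 : Sbar 0 = ε • (1 : Matrix (Fin n) (Fin n) ℝ))
    (hRbar0 : Rbar 0 = ε • (1 : Matrix (Fin n) (Fin n) ℝ))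
    (hSbarrec : ∀ k, Sbar (k + 1) =
      W + α • (Lᵀ * U * L) + (1 - α) • (Aᵀ * Sbar k * A) + α • (Fᵀ * Rbar k * F))
    (hRbarrec : ∀ k, Rbar (k + 1) =
      W + (1 - β) • (Lᵀ * U * L) + β • (Aᵀ * Sbar k * A) + (1 - β) • (Fᵀ * Rbar k * F)) :
    ∀ k, (Sbar (k + 1) - Sbar k).PosSemidef ∧ (Rbar (k + 1) - Rbar k).PosSemidef := by
  have hα0' : (0:ℝ) ≤ α := hα0.le
  have hα1' : (0:ℝ) ≤ 1 - α := by linarith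
  have hβ0' : (0:ℝ) ≤ β := hβ0.le
  have hβ1' : (0:ℝ) ≤ 1 - β := by linarith
  have hLUL : (Lᵀ * U * L).PosSemidef := psd_conj_aux hU L
  have hI : (ε • (1 : Matrix (Fin n) (Fin n) ℝ)).PosSemidef :=
    psd_smul_aux hε.le PosSemidef.one
  intro k
  induction k with
  | zero =>
    constructor
    · have : Sbar 1 - Sbar 0 = (W - ε • 1) + α • (Lᵀ * U * L)
          + (1 - α) • (Aᵀ * Sbar 0 * A) + α • (Fᵀ * Rbar 0 * F) := by
        rw [hSbarrec 0, hSbar0]; abel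
      rw [this]
      exact (((hWge.add (psd_smul_aux hα0' hLUL)).add
        (psd_smul_aux hα1' (by rw [hSbar0]; exact psd_conj_aux hI A))).add
        (psd_smul_aux hα0' (by rw [hRbar0]; exact psd_conj_aux hI F)))
    · have : Rbar 1 - Rbar 0 = (W - ε • 1) + (1 - β) • (Lᵀ * U * L)
          + β • (Aᵀ * Sbar 0 * A) + (1 - β) • (Fᵀ * Rbar 0 * F) := by
        rw [hRbarrec 0, hRbar0]; abel
      rw [this]
      exact (((hWge.add (psd_smul_aux hβ1' hLUL)).add
        (psd_smul_aux hβ0' (by rw [hSbar0]; exact psd_conj_aux hI A))).add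
        (psd_smul_aux hβ1' (by rw [hRbar0]; exact psd_conj_aux hI F)))
  | succ k ih =>
    obtain ⟨ihS, ihR⟩ := ih
    constructor
    · have : Sbar (k+2) - Sbar (k+1)
          = (1 - α) • (Aᵀ * (Sbar (k+1) - Sbar k) * A)
            + α • (Fᵀ * (Rbar (k+1) - Rbar k) * F) := by
        rw [hSbarrec (k+1), hSbarrec k]
        simp only [Matrix.mul_sub, Matrix.sub_mul, smul_sub]; abel
      rw [this]
      exact (psd_smul_aux hα1' (psd_conj_aux ihS A)).add
        (psd_smul_aux hα0' (psd_conj_aux ihR F))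
    · have : Rbar (k+2) - Rbar (k+1)
          = β • (Aᵀ * (Sbar (k+1) - Sbar k) * A)
            + (1 - β) • (Fᵀ * (Rbar (k+1) - Rbar k) * F) := by
        rw [hRbarrec (k+1), hRbarrec k]
        simp only [Matrix.mul_sub, Matrix.sub_mul, smul_sub]; abel
      rw [this]
      exact (psd_smul_aux hβ0' (psd_conj_aux ihS A)).add
        (psd_smul_aux hβ1' (psd_conj_aux ihR F))
end

section
/- Let A ∈ ℝ^{n×n}, B ∈ ℝ^{n×p}, L ∈ ℝ^{p×n}, and 0 ≤ p_d ≤ 1 with p̄_d = 1 − p_d. Define the linear operator 𝓛₁ on n×n real matrices by 𝓛₁(X) = p̄_d (A+BL) X (A+BL)ᵀ + p_d A X Aᵀ. If 𝓛₁ is stable in the sense that 𝓛₁^k(M) → 0 as k → ∞ for every M ∈ ℝ^{n×n}, then the matrix A + p̄_d BL is Schur stable: every eigenvalue of A + p̄_d BL (viewed as a complex matrix) has modulus strictly less than 1. (This is the content of the lemma in the appendix used in the proof of Theorem 4 of the paper.) -/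
open Matrix Filter
open scoped Topology

/-- Nonnegative scalar multiples of real PSD matrices are PSD. -/
lemma psd_smul {n : ℕ} {X : Matrix (Fin n) (Fin n) ℝ} (hX : X.PosSemidef)
    {c : ℝ} (hc : 0 ≤ c) : (c • X).PosSemidef := by
  refine .of_dotProduct_mulVec_nonneg ?_ ?_
  · unfold Matrix.IsHermitian
    rw [conjTranspose_smul, hX.1]
    simp
  · intro x
    rw [smul_mulVec, dotProduct_smul]
    exact mul_nonneg hc (hX.dotProduct_mulVec_nonneg x)

/-- Congruence `P X Pᵀ` preserves PSD over ℝ. -/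
lemma psd_conj {n m : ℕ} {X : Matrix (Fin n) (Fin n) ℝ} (hX : X.PosSemidef)
    (P : Matrix (Fin m) (Fin n) ℝ) : (P * X * Pᵀ).PosSemidef := by
  have := hX.mul_mul_conjTranspose_same P
  simpa [Matrix.conjTranspose_eq_transpose_of_trivial] using this

/-- Diagonal entries of a PSD matrix are nonnegative. -/
lemma psd_diag {n : ℕ} {X : Matrix (Fin n) (Fin n) ℝ} (hX : X.PosSemidef)
    (i : Fin n) : 0 ≤ X i i := by
  have := hX.dotProduct_mulVec_nonneg (Pi.single i 1)
  simpa [dotProduct, mulVec, Pi.single_apply] using this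

/-- Real part of a product of complex linear combinations as a double sum. -/
lemma re_sum_mul {n : ℕ} (a b : Fin n → ℝ) (v : Fin n → ℂ) :
    ((∑ k, (a k : ℂ) * v k) * (starRingEnd ℂ) (∑ l, (b l : ℂ) * v l)).re
      = ∑ k, ∑ l, a k * (v k * (starRingEnd ℂ) (v l)).re * b l := by
  rw [map_sum, Finset.sum_mul_sum, Complex.re_sum]
  refine Finset.sum_congr rfl fun k _ => ?_
  rw [Complex.re_sum]
  refine Finset.sum_congr rfl fun l _ => ?_
  have h : (↑(a k) * v k) * (starRingEnd ℂ) (↑(b l) * v l)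
      = (↑(a k * b l) : ℂ) * (v k * (starRingEnd ℂ) (v l)) := by
    rw [_root_.map_mul, Complex.conj_ofReal]; push_cast; ring
  rw [h, Complex.re_ofReal_mul]; ring

/-- If `v` is an eigenvector of `C` (over ℂ) with eigenvalue `lam`, then the real
matrix `M = Re (v vᴴ)` satisfies `C M Cᵀ = |lam|² M`. -/
lemma key_conj {n : ℕ} (C : Matrix (Fin n) (Fin n) ℝ) (lam : ℂ) (v : Fin n → ℂ)
    (hev : (C.map Complex.ofReal).mulVec v = lam • v) :
    C * (Matrix.of fun i j => (v i * (starRingEnd ℂ) (v j)).re) * Cᵀ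
      = Complex.normSq lam • Matrix.of (fun i j => (v i * (starRingEnd ℂ) (v j)).re) := by
  ext i j
  have hi : (∑ k, (C i k : ℂ) * v k) = lam * v i := by
    simpa [Matrix.mulVec, dotProduct, Matrix.map_apply] using congrFun hev i
  have hj : (∑ l, (C j l : ℂ) * v l) = lam * v j := by
    simpa [Matrix.mulVec, dotProduct, Matrix.map_apply] using congrFun hev j
  have key2 : ((∑ k, (C i k : ℂ) * v k) * (starRingEnd ℂ) (∑ l, (C j l : ℂ) * v l)).re
      = Complex.normSq lam * (v i * (starRingEnd ℂ) (v j)).re := by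
    rw [hi, hj]
    have h : (lam * v i) * (starRingEnd ℂ) (lam * v j)
        = (Complex.normSq lam : ℂ) * (v i * (starRingEnd ℂ) (v j)) := by
      rw [_root_.map_mul, ← Complex.mul_conj]
      ring
    rw [h, Complex.re_ofReal_mul]
  have expand : ((∑ k, (C i k : ℂ) * v k) * (starRingEnd ℂ) (∑ l, (C j l : ℂ) * v l)).re
      = ∑ k, ∑ l, C i k * (v k * (starRingEnd ℂ) (v l)).re * C j l :=
    re_sum_mul (fun k => C i k) (fun l => C j l) v
  rw [Matrix.smul_apply, Matrix.of_apply, smul_eq_mul, ← key2, expand, Matrix.mul_apply]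
  rw [Finset.sum_comm]
  refine Finset.sum_congr rfl fun k _ => ?_
  rw [Matrix.mul_apply, Finset.sum_mul]
  refine Finset.sum_congr rfl fun l _ => ?_
  rw [Matrix.transpose_apply, Matrix.of_apply]

/-- `Re (v vᴴ)` is positive semidefinite. -/
lemma psd_reM {n : ℕ} (v : Fin n → ℂ) :
    (Matrix.of fun i j => (v i * (starRingEnd ℂ) (v j)).re).PosSemidef := by
  refine .of_dotProduct_mulVec_nonneg ?_ ?_
  · ext i j
    simp only [Matrix.conjTranspose_apply, Matrix.of_apply, star_trivial]
    have h : v j * (starRingEnd ℂ) (v i)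
        = (starRingEnd ℂ) (v i * (starRingEnd ℂ) (v j)) := by
      rw [_root_.map_mul, Complex.conj_conj]; ring
    rw [h, Complex.conj_re]
  · intro x
    have h : (star x) ⬝ᵥ ((Matrix.of fun i j => (v i * (starRingEnd ℂ) (v j)).re) *ᵥ x)
        = ((∑ k, (x k : ℂ) * v k) * (starRingEnd ℂ) (∑ l, (x l : ℂ) * v l)).re := by
      rw [re_sum_mul]
      simp only [dotProduct, mulVec, star_trivial]
      refine Finset.sum_congr rfl fun k _ => ?_
      simp only [dotProduct, Matrix.of_apply, Finset.mul_sum]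
      refine Finset.sum_congr rfl fun l _ => ?_
      ring
    rw [h, Complex.mul_conj]
    exact_mod_cast Complex.normSq_nonneg _

/-- Appendix lemma of the paper: if the second-moment operator
`𝓛₁(X) = p̄_d (A+BL) X (A+BL)ᵀ + p_d A X Aᵀ` is stable, then the mean
dynamics matrix `A + p̄_d BL` is Schur stable. -/
theorem stmt_5 {n p : ℕ} (A : Matrix (Fin n) (Fin n) ℝ)
    (B : Matrix (Fin n) (Fin p) ℝ) (L : Matrix (Fin p) (Fin n) ℝ)
    (pd : ℝ) (hpd0 : 0 ≤ pd) (hpd1 : pd ≤ 1)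
    (L1 : Matrix (Fin n) (Fin n) ℝ → Matrix (Fin n) (Fin n) ℝ)
    (hL1 : ∀ X, L1 X =
      (1 - pd) • ((A + B * L) * X * (A + B * L)ᵀ) + pd • (A * X * Aᵀ))
    (hstable : ∀ M : Matrix (Fin n) (Fin n) ℝ,
      Tendsto (fun k => L1^[k] M) atTop (𝓝 0)) :
    ∀ (lam : ℂ) (v : Fin n → ℂ), v ≠ 0 →
      ((A + (1 - pd) • (B * L)).map (Complex.ofReal)).mulVec v = lam • v →
      ‖lam‖ < 1 := by
  intro lam v hv hev
  set C : Matrix (Fin n) (Fin n) ℝ := A + (1 - pd) • (B * L) with hC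
  set M : Matrix (Fin n) (Fin n) ℝ :=
    Matrix.of fun i j => (v i * (starRingEnd ℂ) (v j)).re with hM
  set r : ℝ := Complex.normSq lam with hr
  have hq : (0 : ℝ) ≤ 1 - pd := by linarith
  have hrnn : 0 ≤ r := Complex.normSq_nonneg lam
  have hMpsd : M.PosSemidef := psd_reM v
  -- L1 is additive and commutes with scalars
  have hadd : ∀ X Y, L1 (X + Y) = L1 X + L1 Y := by
    intro X Y
    simp only [hL1, Matrix.mul_add, Matrix.add_mul, smul_add]
    abel
  have hsmul : ∀ (c : ℝ) X, L1 (c • X) = c • L1 X := by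
    intro c X
    simp only [hL1, Matrix.mul_smul, Matrix.smul_mul, smul_add, smul_smul]
    ring_nf
  -- L1 preserves PSD
  have hpsdL1 : ∀ X, X.PosSemidef → (L1 X).PosSemidef := by
    intro X hX
    rw [hL1]
    exact (psd_smul (psd_conj hX (A + B * L)) hq).add (psd_smul (psd_conj hX A) hpd0)
  -- key identity : L1 M = r • M + ((1-pd)*pd) • (BL) M (BL)ᵀ
  have hkey : L1 M = r • M + ((1 - pd) * pd) • ((B * L) * M * (B * L)ᵀ) := by
    have halg : (1 - pd) • ((A + B * L) * M * (A + B * L)ᵀ) + pd • (A * M * Aᵀ)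
        = C * M * Cᵀ + ((1 - pd) * pd) • ((B * L) * M * (B * L)ᵀ) := by
      simp only [hC, Matrix.transpose_add, Matrix.transpose_smul, Matrix.add_mul,
        Matrix.mul_add, Matrix.smul_mul, Matrix.mul_smul, smul_add, smul_smul]
      module
    rw [hL1, halg, key_conj C lam v hev]
  -- main induction
  have hind : ∀ k, (L1^[k] M - r ^ k • M).PosSemidef := by
    intro k
    induction k with
    | zero => simpa using Matrix.PosSemidef.zero
    | succ k ih =>
      have h1 : L1^[k + 1] M = L1 (L1^[k] M - r ^ k • M) + r ^ k • L1 M := by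
        rw [← hsmul, ← hadd, sub_add_cancel, Function.iterate_succ_apply']
      have h2 : L1^[k + 1] M - r ^ (k + 1) • M
          = L1 (L1^[k] M - r ^ k • M) + (r ^ k * ((1 - pd) * pd)) • ((B * L) * M * (B * L)ᵀ) := by
        rw [h1, hkey, pow_succ]
        module
      rw [h2]
      exact (hpsdL1 _ ih).add
        (psd_smul (psd_conj hMpsd (B * L)) (mul_nonneg (pow_nonneg hrnn k) (mul_nonneg hq hpd0)))
  -- pick a coordinate where v is nonzero
  obtain ⟨i0, hi0⟩ := Function.ne_iff.mp hv
  have hM0 : 0 < M i0 i0 := by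
    have h : M i0 i0 = Complex.normSq (v i0) := by
      simp only [hM, Matrix.of_apply, Complex.mul_conj]
      exact Complex.ofReal_re _
    rw [h]
    exact Complex.normSq_pos.mpr hi0
  have hle : ∀ k, r ^ k * M i0 i0 ≤ (L1^[k] M) i0 i0 := by
    intro k
    have h := psd_diag (hind k) i0
    simp only [Matrix.sub_apply, Matrix.smul_apply, smul_eq_mul] at h
    linarith
  -- the diagonal entry tends to 0
  have htend : Tendsto (fun k => (L1^[k] M) i0 i0) atTop (𝓝 0) := by
    have hcont : Continuous fun X : Matrix (Fin n) (Fin n) ℝ => X i0 i0 :=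
      (continuous_apply i0).comp (continuous_apply i0)
    have := (hcont.tendsto 0).comp (hstable M)
    simpa [Function.comp_def] using this
  have hsq : Tendsto (fun k => r ^ k * M i0 i0) atTop (𝓝 0) :=
    squeeze_zero (fun k => mul_nonneg (pow_nonneg hrnn k) hM0.le) hle htend
  have hpow : Tendsto (fun k => r ^ k) atTop (𝓝 0) := by
    have := hsq.mul_const (M i0 i0)⁻¹
    simp only [mul_assoc, mul_inv_cancel₀ hM0.ne', mul_one, zero_mul] at this
    exact this
  have hr1 : r < 1 := by
    have := tendsto_pow_atTop_nhds_zero_iff.mp hpow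
    rwa [abs_of_nonneg hrnn] at this
  have habs : ‖lam‖ ^ 2 = r := Complex.sq_norm lam
  nlinarith [norm_nonneg lam]
end

section
/- Let 0 < α ≤ 1 and 0 < β ≤ 1, and let A ∈ ℝ^{n×n}, B ∈ ℝ^{n×p}, L ∈ ℝ^{p×n}, and 𝒬 a real positive semidefinite p×p matrix. On a probability space let X′ : Ω → ℝⁿ be square-integrable, let Δu : Ω → ℝ^p be square-integrable with E[Δu] = 0 and E[Δu Δuᵀ] = 𝒬, and let η, η₋ : Ω → {0,1} be random variables. Assume: (i) Δu is independent of the triple (X′, η, η₋); (ii) P(η₋ = 1) = α/(α+β); (iii) P(η = 1 | η₋ = 1) = 1−β and P(η = 1 | η₋ = 0) = α; (iv) X′X′ᵀ and the event {η = 1} are conditionally independent given η₋, i.e., E[X′X′ᵀ·1_{η=1}·1_{η₋=j}] = P(η=1 | η₋=j)·E[X′X′ᵀ·1_{η₋=j}] for j ∈ {0,1}. Define X″ = (A + η·BL)X′ + η·B·Δu. Then E[X″X″ᵀ | η = 1] = (A+BL)·[ (1−β)·E[X′X′ᵀ | η₋ = 1] + β·E[X′X′ᵀ | η₋ = 0]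 ]·(A+BL)ᵀ + B𝒬Bᵀ, and E[X″X″ᵀ | η = 0] = A·[ α·E[X′X′ᵀ | η₋ = 1] + (1−α)·E[X′X′ᵀ | η₋ = 0] ]·Aᵀ. (This is the single-step conditional second-moment recursion, equations (eq:notfixedx1)–(eq:split0), established in the proof of Theorem 3 of the paper for the virtual watermark-driven state under stationary Markovian drops.) -/
open Matrix MeasureTheory ProbabilityTheory

/-- The conditional second moment `E[X Xᵀ | S]` (entrywise), where
`E[Z | S] = E[Z·1_S]/P(S)`. -/
noncomputable def condSecondMoment {Ω : Type*} [MeasurableSpace Ω] (μ : Measure Ω)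
    {n : ℕ} (X : Ω → Fin n → ℝ) (S : Set Ω) : Matrix (Fin n) (Fin n) ℝ :=
  Matrix.of fun i j => (∫ ω in S, X ω i * X ω j ∂μ) / (μ S).toReal

open scoped ENNReal

lemma L2mul {Ω : Type*} [MeasurableSpace Ω] {μ : Measure Ω} {f g : Ω → ℝ}
    (hf : MemLp f 2 μ) (hg : MemLp g 2 μ) : Integrable (fun ω => f ω * g ω) μ := by
  have h : (fun ω => f ω * g ω) = fun ω => (((f ω + g ω)^2 - f ω ^2) - g ω ^2)/2 := by
    funext ω; ring
  rw [h]
  exact (((hf.add hg).integrable_sq.sub hf.integrable_sq).sub hg.integrable_sq).div_const _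

lemma coordL2 {Ω : Type*} [MeasurableSpace Ω] {μ : Measure Ω} {n : ℕ} {X : Ω → Fin n → ℝ}
    (hX : MemLp X 2 μ) (k : Fin n) : MemLp (fun ω => X ω k) 2 μ := by
  have := (ContinuousLinearMap.proj (R := ℝ) (φ := fun _ : Fin n => ℝ) k).comp_memLp' hX
  exact this

lemma mulVecL2 {Ω : Type*} [MeasurableSpace Ω] {μ : Measure Ω} {n m : ℕ}
    (M : Matrix (Fin m) (Fin n) ℝ) {X : Ω → Fin n → ℝ}
    (hc : ∀ k, MemLp (fun ω => X ω k) 2 μ) (i : Fin m) :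
    MemLp (fun ω => M.mulVec (X ω) i) 2 μ := by
  simp only [Matrix.mulVec, dotProduct]
  have := memLp_finset_sum' (μ := μ) (p := 2) Finset.univ
    (f := fun (k : Fin n) (ω : Ω) => M i k * X ω k) (fun k _ => (hc k).const_mul (M i k))
  have heq : (∑ x : Fin n, fun ω => M i x * X ω x) = fun ω : Ω => ∑ x : Fin n, M i x * X ω x := by
    funext ω; simp [Finset.sum_apply]
  rwa [heq] at this

lemma indep_key {Ω : Type*} [MeasurableSpace Ω] {μ : Measure Ω} [IsProbabilityMeasure μ] {n q : ℕ}
    {X : Ω → Fin n → ℝ} {η ηm : Ω → ℝ} {U : Ω → Fin q → ℝ}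
    (hX : Measurable X) (hη : Measurable η) (hηm : Measurable ηm) (hU : Measurable U)
    (hindep : IndepFun U (fun ω => (X ω, η ω, ηm ω)) μ)
    (F : (Fin n → ℝ) × ℝ × ℝ → ℝ) (G : (Fin q → ℝ) → ℝ) (hF : Measurable F) (hG : Measurable G) :
    ∫ ω, F (X ω, η ω, ηm ω) * G (U ω) ∂μ =
      (∫ ω, F (X ω, η ω, ηm ω) ∂μ) * ∫ ω, G (U ω) ∂μ := by
  have hT : Measurable (fun ω => (X ω, η ω, ηm ω)) := hX.prodMk (hη.prodMk hηm)
  have h2 : IndepFun (fun ω => F (X ω, η ω, ηm ω)) (fun ω => G (U ω)) μ :=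
    hindep.symm.comp hF hG
  exact h2.integral_fun_mul_eq_mul_integral ((hF.comp hT).aestronglyMeasurable) ((hG.comp hU).aestronglyMeasurable)

lemma mulVec_meas {n m : ℕ} (M : Matrix (Fin m) (Fin n) ℝ) (i : Fin m) :
    Measurable (fun x : Fin n → ℝ => M.mulVec x i) := by
  simp only [Matrix.mulVec, dotProduct]
  exact Finset.measurable_sum (f := fun k (x : Fin n → ℝ) => M i k * x k) _ (fun k _ => measurable_const.mul (measurable_pi_apply k))

lemma setIntegral_S1_indep {Ω : Type*} [MeasurableSpace Ω] {μ : Measure Ω}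
    [IsProbabilityMeasure μ] {n q : ℕ}
    {X : Ω → Fin n → ℝ} {η ηm : Ω → ℝ} {U : Ω → Fin q → ℝ}
    (hX : Measurable X) (hη : Measurable η) (hηm : Measurable ηm) (hU : Measurable U)
    (hindep : IndepFun U (fun ω => (X ω, η ω, ηm ω)) μ)
    (f : (Fin n → ℝ) → ℝ) (G : (Fin q → ℝ) → ℝ) (hf : Measurable f) (hG : Measurable G) :
    ∫ ω in {ω | η ω = 1}, f (X ω) * G (U ω) ∂μ =
      (∫ ω in {ω | η ω = 1}, f (X ω) ∂μ) * ∫ ω, G (U ω) ∂μ := by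
  have hS1m : MeasurableSet {ω | η ω = 1} := hη (measurableSet_singleton 1)
  rw [← integral_indicator hS1m, ← integral_indicator hS1m]
  have h1 : (Set.indicator {ω | η ω = 1} fun ω => f (X ω) * G (U ω)) =
      fun ω => (fun p : (Fin n → ℝ) × ℝ × ℝ => (if p.2.1 = 1 then f p.1 else 0)) (X ω, η ω, ηm ω)
        * G (U ω) := by
    funext ω; by_cases hω : η ω = 1 <;> simp [Set.indicator_apply, hω]
  have h2 : (Set.indicator {ω | η ω = 1} fun ω => f (X ω)) =
      fun ω => (fun p : (Fin n → ℝ) × ℝ × ℝ =>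
        (if p.2.1 = 1 then f p.1 else 0)) (X ω, η ω, ηm ω) := by
    funext ω; by_cases hω : η ω = 1 <;> simp [Set.indicator_apply, hω]
  have hF : Measurable (fun p : (Fin n → ℝ) × ℝ × ℝ => (if p.2.1 = 1 then f p.1 else 0)) :=
    Measurable.ite ((measurable_fst.comp measurable_snd) (measurableSet_singleton 1))
      (hf.comp measurable_fst) measurable_const
  rw [h1, h2]
  exact indep_key hX hη hηm hU hindep _ G hF hG

lemma setIntegral_quadratic {Ω : Type*} [MeasurableSpace Ω] {μ : Measure Ω} {n m : ℕ}
    (M1 M2 : Matrix (Fin m) (Fin n) ℝ) {X : Ω → Fin n → ℝ}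
    (hkl : ∀ k l, Integrable (fun ω => X ω k * X ω l) μ) (S : Set Ω) (i j : Fin m) :
    ∫ ω in S, M1.mulVec (X ω) i * M2.mulVec (X ω) j ∂μ
      = ∑ k, ∑ l, M1 i k * M2 j l * ∫ ω in S, X ω k * X ω l ∂μ := by
  have hrw : (fun ω => M1.mulVec (X ω) i * M2.mulVec (X ω) j)
      = fun ω => ∑ k, ∑ l, M1 i k * M2 j l * (X ω k * X ω l) := by
    funext ω
    simp only [Matrix.mulVec, dotProduct, Finset.sum_mul_sum]
    exact Finset.sum_congr rfl fun k _ => Finset.sum_congr rfl fun l _ => by ring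
  rw [hrw, integral_finset_sum _ (fun k _ => integrable_finset_sum _
    (fun l _ => ((hkl k l).const_mul _).integrableOn))]
  refine Finset.sum_congr rfl fun k _ => ?_
  rw [integral_finset_sum _ (fun l _ => ((hkl k l).const_mul _).integrableOn)]
  exact Finset.sum_congr rfl fun l _ => integral_const_mul _ _

lemma mul_mul_transpose_apply {n m : ℕ} (M : Matrix (Fin n) (Fin m) ℝ)
    (C : Matrix (Fin m) (Fin m) ℝ) (i j : Fin n) :
    (M * C * Mᵀ) i j = ∑ k, ∑ l, M i k * M j l * C k l := by
  simp only [Matrix.mul_apply, Matrix.transpose_apply, Finset.sum_mul]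
  rw [Finset.sum_comm]
  exact Finset.sum_congr rfl fun k _ => Finset.sum_congr rfl fun l _ => by ring

/-- The single-step conditional second-moment recursion, equations
(eq:notfixedx1)–(eq:split0) in the proof of Theorem 3 of the paper, for the
virtual watermark-driven state under stationary Markovian drops. -/
theorem stmt_13 {Ω : Type*} [MeasurableSpace Ω] (μ : Measure Ω) [IsProbabilityMeasure μ]
    {n p : ℕ} (α β : ℝ) (hα0 : 0 < α) (hα1 : α ≤ 1) (hβ0 : 0 < β) (hβ1 : β ≤ 1)
    (A : Matrix (Fin n) (Fin n) ℝ) (B : Matrix (Fin n) (Fin p) ℝ)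
    (L : Matrix (Fin p) (Fin n) ℝ)
    (Q : Matrix (Fin p) (Fin p) ℝ) (hQ : Q.PosSemidef)
    (X' : Ω → Fin n → ℝ) (hX'meas : Measurable X') (hX'L2 : MemLp X' 2 μ)
    (Δu : Ω → Fin p → ℝ) (hΔumeas : Measurable Δu) (hΔuL2 : MemLp Δu 2 μ)
    (hΔumean : ∀ i, ∫ ω, Δu ω i ∂μ = 0)
    (hΔucov : ∀ i j, ∫ ω, Δu ω i * Δu ω j ∂μ = Q i j)
    (η ηm : Ω → ℝ) (hηmeas : Measurable η) (hηmmeas : Measurable ηm)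
    (hη01 : ∀ ω, η ω = 0 ∨ η ω = 1) (hηm01 : ∀ ω, ηm ω = 0 ∨ ηm ω = 1)
    -- (i) Δu is independent of the triple (X′, η, η₋)
    (hindep : IndepFun Δu (fun ω => (X' ω, η ω, ηm ω)) μ)
    -- (ii) stationary distribution of the Markovian drop process
    (hηmlaw : μ {ω | ηm ω = 1} = ENNReal.ofReal (α / (α + β)))
    -- (iii) Markov transition probabilities
    (htrans1 : μ ({ω | η ω = 1} ∩ {ω | ηm ω = 1}) =
      ENNReal.ofReal (1 - β) * μ {ω | ηm ω = 1})
    (htrans0 : μ ({ω | η ω = 1} ∩ {ω | ηm ω = 0}) =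
      ENNReal.ofReal α * μ {ω | ηm ω = 0})
    -- (iv) conditional independence of X′X′ᵀ and {η = 1} given η₋
    (hcondindep : ∀ (j : ℝ), j = 0 ∨ j = 1 → ∀ i i',
      ∫ ω in {ω | η ω = 1} ∩ {ω | ηm ω = j}, X' ω i * X' ω i' ∂μ =
        (μ ({ω | η ω = 1} ∩ {ω | ηm ω = j}) / μ {ω | ηm ω = j}).toReal *
          ∫ ω in {ω | ηm ω = j}, X' ω i * X' ω i' ∂μ)
    (X'' : Ω → Fin n → ℝ)
    (hX'' : ∀ ω, X'' ω =
      (A + η ω • (B * L)).mulVec (X' ω) + η ω • B.mulVec (Δu ω)) :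
    condSecondMoment μ X'' {ω | η ω = 1} =
      (A + B * L) *
        ((1 - β) • condSecondMoment μ X' {ω | ηm ω = 1} +
          β • condSecondMoment μ X' {ω | ηm ω = 0}) * (A + B * L)ᵀ +
        B * Q * Bᵀ ∧
    condSecondMoment μ X'' {ω | η ω = 0} =
      A * (α • condSecondMoment μ X' {ω | ηm ω = 1} +
          (1 - α) • condSecondMoment μ X' {ω | ηm ω = 0}) * Aᵀ := by
  have hs : (0:ℝ) < α + β := by linarith
  have hS1m : MeasurableSet {ω | η ω = 1} := hηmeas (measurableSet_singleton 1)
  have hS0m : MeasurableSet {ω | η ω = 0} := hηmeas (measurableSet_singleton 0)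
  have hT1m : MeasurableSet {ω | ηm ω = 1} := hηmmeas (measurableSet_singleton 1)
  have hT0m : MeasurableSet {ω | ηm ω = 0} := hηmmeas (measurableSet_singleton 0)
  have hT0c : {ω | ηm ω = 0} = {ω | ηm ω = 1}ᶜ := by
    ext ω; rcases hηm01 ω with h | h <;> simp [h]
  have hS0c : {ω | η ω = 0} = {ω | η ω = 1}ᶜ := by
    ext ω; rcases hη01 ω with h | h <;> simp [h]
  have h1sub : (1:ℝ) - α/(α+β) = β/(α+β) := by field_simp; ring
  have hμT0 : μ {ω | ηm ω = 0} = ENNReal.ofReal (β/(α+β)) := by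
    rw [hT0c, prob_compl_eq_one_sub hT1m, hηmlaw,
      show (1:ℝ≥0∞) = ENNReal.ofReal 1 by simp,
      ← ENNReal.ofReal_sub 1 (by positivity), h1sub]
  have hdisjT : Disjoint {ω | ηm ω = 1} {ω | ηm ω = 0} := by
    rw [hT0c]; exact disjoint_compl_right
  have hS1split : {ω | η ω = 1} = ({ω | η ω = 1} ∩ {ω | ηm ω = 1})
      ∪ ({ω | η ω = 1} ∩ {ω | ηm ω = 0}) := by
    rw [hT0c]; exact (Set.inter_union_compl _ _).symm
  have hdisj1 : Disjoint ({ω | η ω = 1} ∩ {ω | ηm ω = 1})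
      ({ω | η ω = 1} ∩ {ω | ηm ω = 0}) :=
    hdisjT.mono Set.inter_subset_right Set.inter_subset_right
  have hμS1 : μ {ω | η ω = 1} = ENNReal.ofReal (α/(α+β)) := by
    rw [hS1split, measure_union hdisj1 (hS1m.inter hT0m), htrans1, htrans0, hηmlaw, hμT0,
      ← ENNReal.ofReal_mul (by linarith), ← ENNReal.ofReal_mul hα0.le,
      ← ENNReal.ofReal_add (mul_nonneg (by linarith) (by positivity)) (by positivity)]
    congr 1
    field_simp
    ring
  have hμS0 : μ {ω | η ω = 0} = ENNReal.ofReal (β/(α+β)) := by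
    rw [hS0c, prob_compl_eq_one_sub hS1m, hμS1,
      show (1:ℝ≥0∞) = ENNReal.ofReal 1 by simp,
      ← ENNReal.ofReal_sub 1 (by positivity), h1sub]
  have hratio1 : (μ ({ω | η ω = 1} ∩ {ω | ηm ω = 1}) / μ {ω | ηm ω = 1}).toReal = 1 - β := by
    rw [htrans1, hηmlaw, ← ENNReal.ofReal_mul (by linarith), ENNReal.toReal_div,
      ENNReal.toReal_ofReal (mul_nonneg (by linarith) (by positivity)),
      ENNReal.toReal_ofReal (by positivity), mul_div_assoc,
      div_self (ne_of_gt (by positivity)), mul_one]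
  have hratio0 : (μ ({ω | η ω = 1} ∩ {ω | ηm ω = 0}) / μ {ω | ηm ω = 0}).toReal = α := by
    rw [htrans0, hμT0, ← ENNReal.ofReal_mul hα0.le, ENNReal.toReal_div,
      ENNReal.toReal_ofReal (mul_nonneg hα0.le (by positivity)),
      ENNReal.toReal_ofReal (by positivity), mul_div_assoc,
      div_self (ne_of_gt (by positivity)), mul_one]
  -- integrability
  have hXc : ∀ k, MemLp (fun ω => X' ω k) 2 μ := fun k => coordL2 hX'L2 k
  have hUc : ∀ k, MemLp (fun ω => Δu ω k) 2 μ := fun k => coordL2 hΔuL2 k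
  have hXkl : ∀ k l, Integrable (fun ω => X' ω k * X' ω l) μ :=
    fun k l => L2mul (hXc k) (hXc l)
  -- conditional-independence consequences
  have hI11 : ∀ k l, ∫ ω in {ω | η ω = 1} ∩ {ω | ηm ω = 1}, X' ω k * X' ω l ∂μ
      = (1-β) * ∫ ω in {ω | ηm ω = 1}, X' ω k * X' ω l ∂μ := by
    intro k l
    rw [hcondindep 1 (Or.inr rfl) k l, hratio1]
  have hI10 : ∀ k l, ∫ ω in {ω | η ω = 1} ∩ {ω | ηm ω = 0}, X' ω k * X' ω l ∂μ
      = α * ∫ ω in {ω | ηm ω = 0}, X' ω k * X' ω l ∂μ := by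
    intro k l
    rw [hcondindep 0 (Or.inl rfl) k l, hratio0]
  have hsplitS1 : ∀ k l, ∫ ω in {ω | η ω = 1}, X' ω k * X' ω l ∂μ
      = (1-β) * (∫ ω in {ω | ηm ω = 1}, X' ω k * X' ω l ∂μ)
        + α * ∫ ω in {ω | ηm ω = 0}, X' ω k * X' ω l ∂μ := by
    intro k l
    rw [hS1split, setIntegral_union hdisj1 (hS1m.inter hT0m)
      ((hXkl k l).integrableOn) ((hXkl k l).integrableOn), hI11 k l, hI10 k l]
  -- splitting over η for each fixed ηm value
  have hT1split : {ω | ηm ω = 1} = ({ω | η ω = 1} ∩ {ω | ηm ω = 1})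
      ∪ ({ω | η ω = 0} ∩ {ω | ηm ω = 1}) := by
    ext ω; rcases hη01 ω with h | h <;> simp [h]
  have hT0split : {ω | ηm ω = 0} = ({ω | η ω = 1} ∩ {ω | ηm ω = 0})
      ∪ ({ω | η ω = 0} ∩ {ω | ηm ω = 0}) := by
    ext ω; rcases hη01 ω with h | h <;> simp [h]
  have hdisjS : Disjoint {ω | η ω = 1} {ω | η ω = 0} := by
    rw [hS0c]; exact disjoint_compl_right
  have hI01 : ∀ k l, ∫ ω in {ω | η ω = 0} ∩ {ω | ηm ω = 1}, X' ω k * X' ω l ∂μ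
      = β * ∫ ω in {ω | ηm ω = 1}, X' ω k * X' ω l ∂μ := by
    intro k l
    have h : ∫ ω in {ω | ηm ω = 1}, X' ω k * X' ω l ∂μ
        = (∫ ω in {ω | η ω = 1} ∩ {ω | ηm ω = 1}, X' ω k * X' ω l ∂μ)
          + ∫ ω in {ω | η ω = 0} ∩ {ω | ηm ω = 1}, X' ω k * X' ω l ∂μ := by
      conv_lhs => rw [hT1split]
      exact setIntegral_union (hdisjS.mono Set.inter_subset_left Set.inter_subset_left)
        (hS0m.inter hT1m) ((hXkl k l).integrableOn) ((hXkl k l).integrableOn)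
    linear_combination - h - hI11 k l
  have hI00 : ∀ k l, ∫ ω in {ω | η ω = 0} ∩ {ω | ηm ω = 0}, X' ω k * X' ω l ∂μ
      = (1-α) * ∫ ω in {ω | ηm ω = 0}, X' ω k * X' ω l ∂μ := by
    intro k l
    have h : ∫ ω in {ω | ηm ω = 0}, X' ω k * X' ω l ∂μ
        = (∫ ω in {ω | η ω = 1} ∩ {ω | ηm ω = 0}, X' ω k * X' ω l ∂μ)
          + ∫ ω in {ω | η ω = 0} ∩ {ω | ηm ω = 0}, X' ω k * X' ω l ∂μ := by
      conv_lhs => rw [hT0split]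
      exact setIntegral_union (hdisjS.mono Set.inter_subset_left Set.inter_subset_left)
        (hS0m.inter hT0m) ((hXkl k l).integrableOn) ((hXkl k l).integrableOn)
    linear_combination - h - hI10 k l
  have hS0split : {ω | η ω = 0} = ({ω | η ω = 0} ∩ {ω | ηm ω = 1})
      ∪ ({ω | η ω = 0} ∩ {ω | ηm ω = 0}) := by
    rw [hT0c]; exact (Set.inter_union_compl _ _).symm
  have hsplitS0 : ∀ k l, ∫ ω in {ω | η ω = 0}, X' ω k * X' ω l ∂μ
      = β * (∫ ω in {ω | ηm ω = 1}, X' ω k * X' ω l ∂μ)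
        + (1-α) * ∫ ω in {ω | ηm ω = 0}, X' ω k * X' ω l ∂μ := by
    intro k l
    rw [hS0split, setIntegral_union (hdisjT.mono Set.inter_subset_right Set.inter_subset_right)
      (hS0m.inter hT0m) ((hXkl k l).integrableOn) ((hXkl k l).integrableOn), hI01 k l, hI00 k l]
  -- the key integral over {η = 1}
  have hGzero : ∀ j, ∫ ω, B.mulVec (Δu ω) j ∂μ = 0 := by
    intro j
    simp only [Matrix.mulVec, dotProduct]
    rw [integral_finset_sum _ (fun k _ => ((hUc k).integrable one_le_two).const_mul _)]
    simp [integral_const_mul, hΔumean]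
  have hquadU : ∀ i j, ∫ ω, B.mulVec (Δu ω) i * B.mulVec (Δu ω) j ∂μ
      = ∑ k, ∑ l, B i k * B j l * Q k l := by
    intro i j
    have h := setIntegral_quadratic B B (fun k l => L2mul (hUc k) (hUc l)) Set.univ i j
    simp only [setIntegral_univ] at h
    rw [h]
    exact Finset.sum_congr rfl fun k _ => Finset.sum_congr rfl fun l _ => by rw [hΔucov k l]
  have hXX1 : ∀ i j, ∫ ω in {ω | η ω = 1}, X'' ω i * X'' ω j ∂μ
      = (∑ k, ∑ l, (A + B * L) i k * (A + B * L) j l *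
          ((1-β) * (∫ ω in {ω | ηm ω = 1}, X' ω k * X' ω l ∂μ)
            + α * ∫ ω in {ω | ηm ω = 0}, X' ω k * X' ω l ∂μ))
        + (α/(α+β)) * ∑ k, ∑ l, B i k * B j l * Q k l := by
    intro i j
    have hcong : Set.EqOn (fun ω => X'' ω i * X'' ω j)
        (fun ω => ((A + B * L).mulVec (X' ω) i * (A + B * L).mulVec (X' ω) j
            + (A + B * L).mulVec (X' ω) i * B.mulVec (Δu ω) j)
          + ((A + B * L).mulVec (X' ω) j * B.mulVec (Δu ω) i
            + B.mulVec (Δu ω) i * B.mulVec (Δu ω) j)) {ω | η ω = 1} := by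
      intro ω hω
      have hη1 : η ω = 1 := hω
      simp only [hX'' ω, hη1, one_smul, Pi.add_apply]
      ring
    rw [setIntegral_congr_fun hS1m hcong]
    have e1 : Integrable (fun ω => (A + B * L).mulVec (X' ω) i
        * (A + B * L).mulVec (X' ω) j) μ :=
      L2mul (mulVecL2 _ hXc i) (mulVecL2 _ hXc j)
    have e2 : Integrable (fun ω => (A + B * L).mulVec (X' ω) i * B.mulVec (Δu ω) j) μ :=
      L2mul (mulVecL2 _ hXc i) (mulVecL2 _ hUc j)
    have e3 : Integrable (fun ω => (A + B * L).mulVec (X' ω) j * B.mulVec (Δu ω) i) μ :=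
      L2mul (mulVecL2 _ hXc j) (mulVecL2 _ hUc i)
    have e4 : Integrable (fun ω => B.mulVec (Δu ω) i * B.mulVec (Δu ω) j) μ :=
      L2mul (mulVecL2 _ hUc i) (mulVecL2 _ hUc j)
    have e12 : Integrable (fun ω => (A + B * L).mulVec (X' ω) i * (A + B * L).mulVec (X' ω) j
        + (A + B * L).mulVec (X' ω) i * B.mulVec (Δu ω) j) μ := e1.add e2
    have e34 : Integrable (fun ω => (A + B * L).mulVec (X' ω) j * B.mulVec (Δu ω) i
        + B.mulVec (Δu ω) i * B.mulVec (Δu ω) j) μ := e3.add e4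
    rw [integral_add (e12.integrableOn) (e34.integrableOn),
      integral_add e1.integrableOn e2.integrableOn,
      integral_add e3.integrableOn e4.integrableOn]
    -- cross terms vanish
    have hc1 : ∫ ω in {ω | η ω = 1}, (A + B * L).mulVec (X' ω) i * B.mulVec (Δu ω) j ∂μ = 0 := by
      rw [setIntegral_S1_indep hX'meas hηmeas hηmmeas hΔumeas hindep
        (fun x => (A + B * L).mulVec x i) (fun u => B.mulVec u j)
        (mulVec_meas _ i) (mulVec_meas _ j), hGzero j, mul_zero]
    have hc2 : ∫ ω in {ω | η ω = 1}, (A + B * L).mulVec (X' ω) j * B.mulVec (Δu ω) i ∂μ = 0 := by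
      rw [setIntegral_S1_indep hX'meas hηmeas hηmmeas hΔumeas hindep
        (fun x => (A + B * L).mulVec x j) (fun u => B.mulVec u i)
        (mulVec_meas _ j) (mulVec_meas _ i), hGzero i, mul_zero]
    -- quadratic noise term
    have hc3 : ∫ ω in {ω | η ω = 1}, B.mulVec (Δu ω) i * B.mulVec (Δu ω) j ∂μ
        = (α/(α+β)) * ∑ k, ∑ l, B i k * B j l * Q k l := by
      have hone : (fun ω => B.mulVec (Δu ω) i * B.mulVec (Δu ω) j)
          = fun ω => (fun _ : Fin n → ℝ => (1:ℝ)) (X' ω)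
            * (fun u => B.mulVec u i * B.mulVec u j) (Δu ω) := by
        funext ω; simp
      rw [hone, setIntegral_S1_indep hX'meas hηmeas hηmmeas hΔumeas hindep
        (fun _ => (1:ℝ)) (fun u => B.mulVec u i * B.mulVec u j)
        measurable_const ((mulVec_meas _ i).mul (mulVec_meas _ j)), hquadU i j]
      simp [setIntegral_const, measureReal_def, hμS1, ENNReal.toReal_ofReal (by positivity : (0:ℝ) ≤ α/(α+β))]
    -- main quadratic term in X'
    have hc0 : ∫ ω in {ω | η ω = 1}, (A + B * L).mulVec (X' ω) i
        * (A + B * L).mulVec (X' ω) j ∂μ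
        = ∑ k, ∑ l, (A + B * L) i k * (A + B * L) j l *
            ((1-β) * (∫ ω in {ω | ηm ω = 1}, X' ω k * X' ω l ∂μ)
              + α * ∫ ω in {ω | ηm ω = 0}, X' ω k * X' ω l ∂μ) := by
      rw [setIntegral_quadratic _ _ hXkl _ i j]
      exact Finset.sum_congr rfl fun k _ => Finset.sum_congr rfl fun l _ => by
        rw [hsplitS1 k l]
    rw [hc0, hc1, hc2, hc3]
    ring
  have hXX0 : ∀ i j, ∫ ω in {ω | η ω = 0}, X'' ω i * X'' ω j ∂μ
      = ∑ k, ∑ l, A i k * A j l *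
          (β * (∫ ω in {ω | ηm ω = 1}, X' ω k * X' ω l ∂μ)
            + (1-α) * ∫ ω in {ω | ηm ω = 0}, X' ω k * X' ω l ∂μ) := by
    intro i j
    have hcong : Set.EqOn (fun ω => X'' ω i * X'' ω j)
        (fun ω => A.mulVec (X' ω) i * A.mulVec (X' ω) j) {ω | η ω = 0} := by
      intro ω hω
      have hη0 : η ω = 0 := hω
      simp only [hX'' ω, hη0, zero_smul, add_zero, Pi.add_apply, Pi.zero_apply, Matrix.add_mulVec,
        Matrix.zero_mulVec]
    rw [setIntegral_congr_fun hS0m hcong, setIntegral_quadratic _ _ hXkl _ i j]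
    exact Finset.sum_congr rfl fun k _ => Finset.sum_congr rfl fun l _ => by rw [hsplitS0 k l]
  constructor
  · ext i j
    simp only [Matrix.add_apply, mul_mul_transpose_apply, condSecondMoment, Matrix.of_apply,
      Matrix.smul_apply, smul_eq_mul, hXX1 i j, hμS1, hηmlaw, hμT0,
      ENNReal.toReal_ofReal (show (0:ℝ) ≤ α/(α+β) by positivity),
      ENNReal.toReal_ofReal (show (0:ℝ) ≤ β/(α+β) by positivity)]
    rw [add_div, mul_div_cancel_left₀ _ (show α/(α+β) ≠ 0 from ne_of_gt (by positivity))]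
    congr 1
    rw [Finset.sum_div]
    refine Finset.sum_congr rfl fun k _ => ?_
    rw [Finset.sum_div]
    refine Finset.sum_congr rfl fun l _ => ?_
    field_simp [hα0.ne', hβ0.ne', ne_of_gt hs]
  · ext i j
    simp only [Matrix.add_apply, mul_mul_transpose_apply, condSecondMoment, Matrix.of_apply,
      Matrix.smul_apply, smul_eq_mul, hXX0 i j, hμS0, hηmlaw, hμT0,
      ENNReal.toReal_ofReal (show (0:ℝ) ≤ α/(α+β) by positivity),
      ENNReal.toReal_ofReal (show (0:ℝ) ≤ β/(α+β) by positivity)]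
    rw [Finset.sum_div]
    refine Finset.sum_congr rfl fun k _ => ?_
    rw [Finset.sum_div]
    refine Finset.sum_congr rfl fun l _ => ?_
    field_simp [hα0.ne', hβ0.ne', ne_of_gt hs]
end
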